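/- arXiv:2507.19106 — 6 statements merged into one kernel-verified Lean document; each statement's English description precedes it below -/
import Mathlib

section
/- Let $U \in C^1([-1,1])$ be real-valued with $U'(x) \geq m > 0$ for all $x \in [-1,1]$. Then for every exponent $q \geq 1$ there exists a constant $C > 0$ such that for all $\mu \in [-1,1]$ and all $\nu \in [U(-1), U(1)]$, $\big\| \log\big[(U-\nu)^2 + \mu^2\big] \big\|_{L^q(-1,1)} \leq C$. -/
open MeasureTheory Set

lemma abs_log_le_aux (ε s : ℝ) (hε : 0 < ε) (hs : 0 < s) :
    |Real.log s| ≤ (s ^ ε + s ^ (-ε)) / ε := by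
  have h1 : ∀ t : ℝ, 0 < t → Real.log t ≤ t := fun t ht =>
    (Real.log_le_sub_one_of_pos ht).trans (by linarith)
  rw [le_div_iff₀ hε]
  rcases le_or_gt 0 (Real.log s) with h | h
  · rw [abs_of_nonneg h]
    have h2 := h1 (s ^ ε) (Real.rpow_pos_of_pos hs _)
    rw [Real.log_rpow hs] at h2
    nlinarith [(Real.rpow_pos_of_pos hs (-ε)).le]
  · rw [abs_of_neg h]
    have h2 := h1 (s ^ (-ε)) (Real.rpow_pos_of_pos hs _)
    rw [Real.log_rpow hs] at h2
    nlinarith [(Real.rpow_pos_of_pos hs ε).le]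

lemma sing_bound (a : ℝ) (ha : a ∈ Icc (-1:ℝ) 1) :
    ∫⁻ x in Ioo (-1:ℝ) 1, ENNReal.ofReal (|x - a| ^ (-(2:ℝ)⁻¹)) ≤ ENNReal.ofReal 8 := by
  set H : ℝ → ℝ := fun x => |x| ^ (-(2:ℝ)⁻¹) with hH_def
  have hr : (-1:ℝ) < -(2:ℝ)⁻¹ := by norm_num
  have hHnn : ∀ x, 0 ≤ H x := fun x => Real.rpow_nonneg (abs_nonneg x) _
  have h1 : IntervalIntegrable (fun x : ℝ => x ^ (-(2:ℝ)⁻¹)) volume 0 2 :=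
    intervalIntegral.intervalIntegrable_rpow' hr
  have hH1 : IntervalIntegrable H volume 0 2 := by
    rw [intervalIntegrable_iff_integrableOn_Ioo_of_le (by norm_num)] at h1 ⊢
    exact h1.congr_fun (fun x hx => by simp [hH_def, abs_of_pos hx.1]) measurableSet_Ioo
  have hHneg : (fun x => H (-x)) = H := funext fun x => by simp [hH_def]
  have hH2 : IntervalIntegrable H volume (-2) 0 := by
    have h2 := (IntervalIntegrable.iff_comp_neg (f := H) (a := 0) (b := 2) enorm_ne_top).mp hH1
    rw [hHneg] at h2
    simpa using h2.symm
  have hH : IntervalIntegrable H volume (-2) 2 := hH2.trans hH1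
  have v1 : ∫ x in (0:ℝ)..2, H x ≤ 4 := by
    have he : EqOn H (fun x : ℝ => x ^ (-(2:ℝ)⁻¹)) (Set.uIcc (0:ℝ) 2) := by
      intro x hx
      rw [Set.uIcc_of_le (by norm_num)] at hx
      simp [hH_def, abs_of_nonneg hx.1]
    rw [intervalIntegral.integral_congr he, integral_rpow (Or.inl hr)]
    rw [show -(2:ℝ)⁻¹ + 1 = (2:ℝ)⁻¹ by norm_num, Real.zero_rpow (by norm_num)]
    have h2 : (2:ℝ) ^ ((2:ℝ)⁻¹) ≤ 2 := by
      calc (2:ℝ) ^ ((2:ℝ)⁻¹) ≤ 2 ^ (1:ℝ) :=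
            Real.rpow_le_rpow_of_exponent_le one_le_two (by norm_num)
        _ = 2 := Real.rpow_one 2
    rw [div_le_iff₀ (by norm_num : (0:ℝ) < 2⁻¹)]  -- maybe wrong; handle below
    linarith
  have v2 : ∫ x in (-2:ℝ)..0, H x = ∫ x in (0:ℝ)..2, H x := by
    have := intervalIntegral.integral_comp_neg (a := (0:ℝ)) (b := 2) (f := H)
    rw [hHneg] at this
    simpa using this.symm
  have vtot : ∫ x in (-2:ℝ)..2, H x ≤ 8 := by
    rw [← intervalIntegral.integral_add_adjacent_intervals hH2 hH1]
    linarith [v2, v1]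
  have hsub : Ioo (-1:ℝ) 1 ⊆ Ioo (a-2) (a+2) := fun x hx =>
    ⟨by linarith [ha.2, hx.1], by linarith [ha.1, hx.2]⟩
  have hInt : IntegrableOn (fun x => H (x - a)) (Ioo (a-2) (a+2)) := by
    have h3 := hH.comp_sub_right a
    rw [intervalIntegrable_iff_integrableOn_Ioo_of_le (by linarith)] at h3
    simpa [show (-2:ℝ)+a = a-2 by ring, show (2:ℝ)+a = a+2 by ring] using h3
  have hval : ∫ x in Ioo (a-2) (a+2), H (x - a) ≤ 8 := by
    rw [← MeasureTheory.integral_Ioc_eq_integral_Ioo,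
      ← intervalIntegral.integral_of_le (by linarith : a-2 ≤ a+2)]
    have h4 := intervalIntegral.integral_comp_sub_right (a := a-2) (b := a+2) H a
    rw [show a-2-a = (-2:ℝ) by ring, show a+2-a = (2:ℝ) by ring] at h4
    rw [h4]; exact vtot
  calc ∫⁻ x in Ioo (-1:ℝ) 1, ENNReal.ofReal (|x - a| ^ (-(2:ℝ)⁻¹))
      ≤ ∫⁻ x in Ioo (a-2) (a+2), ENNReal.ofReal (|x - a| ^ (-(2:ℝ)⁻¹)) :=
        lintegral_mono' (Measure.restrict_mono hsub le_rfl) le_rfl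
    _ = ENNReal.ofReal (∫ x in Ioo (a-2) (a+2), H (x - a)) :=
        (MeasureTheory.ofReal_integral_eq_lintegral_ofReal hInt
          (Filter.Eventually.of_forall fun x => hHnn _)).symm
    _ ≤ ENNReal.ofReal 8 := ENNReal.ofReal_le_ofReal hval
lemma mono_aux (U U' : ℝ → ℝ) (m : ℝ)
    (hU : ∀ x ∈ Icc (-1:ℝ) 1, HasDerivWithinAt U (U' x) (Icc (-1:ℝ) 1) x)
    (hU'm : ∀ x ∈ Icc (-1:ℝ) 1, m ≤ U' x) :
    MonotoneOn (fun x => U x - m * x) (Icc (-1:ℝ) 1) := by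
  have hUc : ContinuousOn U (Icc (-1:ℝ) 1) := fun x hx => (hU x hx).continuousWithinAt
  apply monotoneOn_of_hasDerivWithinAt_nonneg (convex_Icc _ _)
    (hUc.sub (continuousOn_const.mul continuousOn_id)) (f' := fun x => U' x - m)
  · intro x hx
    have hx' : x ∈ Icc (-1:ℝ) 1 := interior_subset hx
    have h1 : HasDerivWithinAt (fun y : ℝ => m * y) (m * 1) (interior (Icc (-1:ℝ) 1)) x :=
      (hasDerivWithinAt_id x _).const_mul m
    exact (((hU x hx').mono interior_subset).sub h1).congr_deriv (by ring)
  · intro x hx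
    linarith [hU'm x (interior_subset hx)]

lemma lip_below (U U' : ℝ → ℝ) (m : ℝ)
    (hU : ∀ x ∈ Icc (-1:ℝ) 1, HasDerivWithinAt U (U' x) (Icc (-1:ℝ) 1) x)
    (hU'm : ∀ x ∈ Icc (-1:ℝ) 1, m ≤ U' x) :
    ∀ x ∈ Icc (-1:ℝ) 1, ∀ y ∈ Icc (-1:ℝ) 1, m * |x - y| ≤ |U x - U y| := by
  have hV := mono_aux U U' m hU hU'm
  have key : ∀ x ∈ Icc (-1:ℝ) 1, ∀ y ∈ Icc (-1:ℝ) 1, y ≤ x → m * |x - y| ≤ |U x - U y| := by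
    intro x hx y hy hyx
    have h1 := hV hy hx hyx
    simp only at h1
    have h2 : m * (x - y) ≤ U x - U y := by linarith
    rw [abs_of_nonneg (by linarith : (0:ℝ) ≤ x - y)]
    rcases le_or_gt 0 m with hm | hm
    · rw [abs_of_nonneg (le_trans (mul_nonneg hm (by linarith)) h2)]
      exact h2
    · calc m * (x - y) ≤ 0 := mul_nonpos_of_nonpos_of_nonneg hm.le (by linarith)
        _ ≤ |U x - U y| := abs_nonneg _
  intro x hx y hy
  rcases le_total y x with h | h
  · exact key x hx y hy h
  · rw [abs_sub_comm, abs_sub_comm (U x)]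
    exact key y hy x hx h

/-- for `U ∈ C¹([-1,1])` with `U' ≥ m > 0` and any `q ≥ 1`, the
`L^q(-1,1)` norm of `log[(U-ν)² + μ²]` is bounded uniformly in `μ ∈ [-1,1]`
and `ν ∈ [U(-1), U(1)]`. -/
theorem stmt2 (U U' : ℝ → ℝ) (m : ℝ) (hm : 0 < m)
    (hU : ∀ x ∈ Set.Icc (-1:ℝ) 1, HasDerivWithinAt U (U' x) (Set.Icc (-1:ℝ) 1) x)
    (hU'c : ContinuousOn U' (Set.Icc (-1:ℝ) 1))
    (hU'm : ∀ x ∈ Set.Icc (-1:ℝ) 1, m ≤ U' x)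
    (q : ℝ) (hq : 1 ≤ q) :
    ∃ C > 0, ∀ μ ∈ Set.Icc (-1:ℝ) 1, ∀ ν ∈ Set.Icc (U (-1)) (U 1),
      ∫⁻ x in Set.Ioo (-1:ℝ) 1,
          ENNReal.ofReal (|Real.log ((U x - ν) ^ 2 + μ ^ 2)| ^ q)
        ≤ ENNReal.ofReal (C ^ q) := by
  have hUc : ContinuousOn U (Icc (-1:ℝ) 1) := fun x hx => (hU x hx).continuousWithinAt
  have hlip := lip_below U U' m hU hU'm
  obtain ⟨K, hK⟩ := isCompact_Icc.exists_bound_of_continuousOn hUc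
  have hK' : ∀ x ∈ Icc (-1:ℝ) 1, |U x| ≤ K := fun x hx => by
    simpa using hK x hx
  have hK0 : 0 ≤ K := le_trans (abs_nonneg _) (hK' (-1) (by norm_num))
  set S : ℝ := (2*K)^2 + 1 with hS_def
  have hS1 : 1 ≤ S := by nlinarith
  have hq0 : 0 < q := lt_of_lt_of_le one_pos hq
  set ε : ℝ := 1/(4*q) with hε_def
  have hε : 0 < ε := by positivity
  set c : ℝ := (2/ε)^q with hc_def
  have hc0 : 0 ≤ c := Real.rpow_nonneg (by positivity) _
  set A : ℝ := c * S with hA_def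
  set B : ℝ := c * m ^ (-(2:ℝ)⁻¹) with hB_def
  have hA0 : 0 ≤ A := mul_nonneg hc0 (by linarith)
  have hB0 : 0 ≤ B := mul_nonneg hc0 (Real.rpow_nonneg hm.le _)
  refine ⟨2*A + 8*B + 1, by linarith, ?_⟩
  intro μ hμ ν hν
  obtain ⟨x₀, hx₀, hUx₀⟩ : ∃ x₀ ∈ Icc (-1:ℝ) 1, U x₀ = ν :=
    intermediate_value_Icc (by norm_num) hUc hν
  -- pointwise bound
  have key : ∀ x ∈ Ioo (-1:ℝ) 1, x ≠ x₀ →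
      |Real.log ((U x - ν) ^ 2 + μ ^ 2)| ^ q ≤ A + B * |x - x₀| ^ (-(2:ℝ)⁻¹) := by
    intro x hx hne
    have hxI : x ∈ Icc (-1:ℝ) 1 := Ioo_subset_Icc_self hx
    set s : ℝ := (U x - ν) ^ 2 + μ ^ 2 with hs_def
    have hlow : m * |x - x₀| ≤ |U x - U x₀| := hlip x hxI x₀ hx₀
    have habs : 0 < |x - x₀| := abs_pos.2 (sub_ne_zero.2 hne)
    have ht0 : 0 < m * |x - x₀| := by positivity
    have hls : (m * |x - x₀|)^2 ≤ s := by
      calc (m * |x - x₀|)^2 ≤ |U x - U x₀|^2 := by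
            exact pow_le_pow_left₀ ht0.le hlow 2
        _ = (U x - ν)^2 := by rw [hUx₀, sq_abs]
        _ ≤ s := le_add_of_nonneg_right (sq_nonneg μ)
    have hs0 : 0 < s := lt_of_lt_of_le (by positivity) hls
    -- upper bound on s
    have hν' : |ν| ≤ K := by
      rw [abs_le]
      constructor
      · linarith [hν.1, (abs_le.1 (hK' (-1) (by norm_num))).1]
      · linarith [hν.2, (abs_le.1 (hK' 1 (by norm_num))).2]
    have hsS : s ≤ S := by
      have h1 : |U x - ν| ≤ 2*K := by
        calc |U x - ν| ≤ |U x| + |ν| := abs_sub _ _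
          _ ≤ K + K := add_le_add (hK' x hxI) hν'
          _ = 2*K := by ring
      have h2 : (U x - ν)^2 ≤ (2*K)^2 := by
        rw [← sq_abs (U x - ν)]
        exact pow_le_pow_left₀ (abs_nonneg _) h1 2
      have h3 : μ^2 ≤ 1 := by
        rw [← sq_abs μ]
        nlinarith [abs_le.2 ⟨hμ.1, hμ.2⟩, abs_nonneg μ]
      simp only [hs_def, hS_def]; linarith
    -- step 1
    have h1 := abs_log_le_aux ε s hε hs0
    have h2 : |Real.log s| ^ q ≤ ((s^ε + s^(-ε))/ε) ^ q :=
      Real.rpow_le_rpow (abs_nonneg _) h1 hq0.le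
    -- step 3
    have hsε : (0:ℝ) ≤ s ^ ε := (Real.rpow_pos_of_pos hs0 _).le
    have hsε' : (0:ℝ) ≤ s ^ (-ε) := (Real.rpow_pos_of_pos hs0 _).le
    have hεq : ε * q = (4:ℝ)⁻¹ := by rw [hε_def]; field_simp
    have e1 : ((2/ε) * s ^ (-ε)) ^ q = c * s ^ (-(4:ℝ)⁻¹) := by
      rw [Real.mul_rpow (by positivity) hsε', hc_def, ← Real.rpow_mul hs0.le,
        show (-ε)*q = -(4:ℝ)⁻¹ by rw [← hεq]; ring]
    have e2 : ((2/ε) * s ^ ε) ^ q = c * s ^ ((4:ℝ)⁻¹) := by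
      rw [Real.mul_rpow (by positivity) hsε, hc_def, ← Real.rpow_mul hs0.le, hεq]
    have bound1 : s ^ (-(4:ℝ)⁻¹) ≤ m ^ (-(2:ℝ)⁻¹) * |x - x₀| ^ (-(2:ℝ)⁻¹) := by
      calc s ^ (-(4:ℝ)⁻¹) ≤ ((m*|x-x₀|)^2) ^ (-(4:ℝ)⁻¹) :=
            Real.rpow_le_rpow_of_nonpos (by positivity) hls (by norm_num)
        _ = (m*|x-x₀|) ^ (-(2:ℝ)⁻¹) := by
            rw [← Real.rpow_natCast (m*|x-x₀|) 2, ← Real.rpow_mul ht0.le]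
            norm_num
        _ = _ := Real.mul_rpow hm.le (abs_nonneg _)
    have bound2 : s ^ ((4:ℝ)⁻¹) ≤ S := by
      calc s ^ ((4:ℝ)⁻¹) ≤ S ^ ((4:ℝ)⁻¹) := Real.rpow_le_rpow hs0.le hsS (by norm_num)
        _ ≤ S ^ (1:ℝ) := Real.rpow_le_rpow_of_exponent_le hS1 (by norm_num)
        _ = S := Real.rpow_one S
    rcases le_total (s^ε) (s^(-ε)) with hcs | hcs
    · calc |Real.log s| ^ q ≤ ((s^ε + s^(-ε))/ε) ^ q := h2
        _ ≤ ((2/ε) * s ^ (-ε)) ^ q := by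
            apply Real.rpow_le_rpow (by positivity) ?_ hq0.le
            rw [show (2/ε) * s ^ (-ε) = (s^(-ε) + s^(-ε))/ε by field_simp; ring]
            gcongr
        _ = c * s ^ (-(4:ℝ)⁻¹) := e1
        _ ≤ B * |x - x₀| ^ (-(2:ℝ)⁻¹) := by
            rw [hB_def, mul_assoc]
            exact mul_le_mul_of_nonneg_left bound1 hc0
        _ ≤ A + B * |x - x₀| ^ (-(2:ℝ)⁻¹) := le_add_of_nonneg_left hA0
    · calc |Real.log s| ^ q ≤ ((s^ε + s^(-ε))/ε) ^ q := h2
        _ ≤ ((2/ε) * s ^ ε) ^ q := by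
            apply Real.rpow_le_rpow (by positivity) ?_ hq0.le
            rw [show (2/ε) * s ^ ε = (s^ε + s^ε)/ε by field_simp; ring]
            gcongr
        _ = c * s ^ ((4:ℝ)⁻¹) := e2
        _ ≤ A := by
            rw [hA_def]
            exact mul_le_mul_of_nonneg_left bound2 hc0
        _ ≤ A + B * |x - x₀| ^ (-(2:ℝ)⁻¹) :=
            le_add_of_nonneg_right (mul_nonneg hB0 (Real.rpow_nonneg (abs_nonneg _) _))
  -- integrate
  have hx0null : (volume.restrict (Ioo (-1:ℝ) 1)) {x₀} = 0 := by
    rw [Measure.restrict_apply (measurableSet_singleton x₀)]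
    exact measure_mono_null Set.inter_subset_left (measure_singleton x₀)
  have haene : ∀ᵐ x ∂(volume.restrict (Ioo (-1:ℝ) 1)), x ≠ x₀ := by
    rw [ae_iff]
    convert hx0null using 2
    ext y; simp
  have hae : ∀ᵐ x ∂(volume.restrict (Ioo (-1:ℝ) 1)),
      ENNReal.ofReal (|Real.log ((U x - ν) ^ 2 + μ ^ 2)| ^ q) ≤
      ENNReal.ofReal A + ENNReal.ofReal B * ENNReal.ofReal (|x - x₀| ^ (-(2:ℝ)⁻¹)) := by
    filter_upwards [ae_restrict_mem measurableSet_Ioo, haene] with x hx hne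
    calc ENNReal.ofReal (|Real.log ((U x - ν) ^ 2 + μ ^ 2)| ^ q)
        ≤ ENNReal.ofReal (A + B * |x - x₀| ^ (-(2:ℝ)⁻¹)) :=
          ENNReal.ofReal_le_ofReal (key x hx hne)
      _ = ENNReal.ofReal A + ENNReal.ofReal (B * |x - x₀| ^ (-(2:ℝ)⁻¹)) :=
          ENNReal.ofReal_add hA0 (mul_nonneg hB0 (Real.rpow_nonneg (abs_nonneg _) _))
      _ = ENNReal.ofReal A + ENNReal.ofReal B * ENNReal.ofReal (|x - x₀| ^ (-(2:ℝ)⁻¹)) := by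
          rw [ENNReal.ofReal_mul hB0]
  calc ∫⁻ x in Ioo (-1:ℝ) 1, ENNReal.ofReal (|Real.log ((U x - ν) ^ 2 + μ ^ 2)| ^ q)
      ≤ ∫⁻ x in Ioo (-1:ℝ) 1, (ENNReal.ofReal A +
          ENNReal.ofReal B * ENNReal.ofReal (|x - x₀| ^ (-(2:ℝ)⁻¹))) :=
        lintegral_mono_ae hae
    _ = ENNReal.ofReal A * volume (Ioo (-1:ℝ) 1) +
        ENNReal.ofReal B * ∫⁻ x in Ioo (-1:ℝ) 1, ENNReal.ofReal (|x - x₀| ^ (-(2:ℝ)⁻¹)) := by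
        rw [lintegral_add_left measurable_const, lintegral_const,
          Measure.restrict_apply MeasurableSet.univ, Set.univ_inter,
          lintegral_const_mul' _ _ ENNReal.ofReal_ne_top]
    _ ≤ ENNReal.ofReal A * ENNReal.ofReal 2 + ENNReal.ofReal B * ENNReal.ofReal 8 := by
        gcongr
        · rw [Real.volume_Ioo]
          exact ENNReal.ofReal_le_ofReal (by norm_num)
        · exact sing_bound x₀ hx₀
    _ = ENNReal.ofReal (2*A + 8*B) := by
        rw [← ENNReal.ofReal_mul hA0, ← ENNReal.ofReal_mul hB0,
          ← ENNReal.ofReal_add (by positivity) (by positivity)]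
        ring_nf
    _ ≤ ENNReal.ofReal ((2*A + 8*B + 1) ^ q) := by
        apply ENNReal.ofReal_le_ofReal
        calc 2*A + 8*B ≤ 2*A + 8*B + 1 := by linarith
          _ = (2*A + 8*B + 1) ^ (1:ℝ) := (Real.rpow_one _).symm
          _ ≤ (2*A + 8*B + 1) ^ q := Real.rpow_le_rpow_of_exponent_le (by linarith) hq
end

section
/- Let $U \in C^1([-1,1])$ be real-valued with $U' \geq m > 0$ on $[-1,1]$, and let $q > 1$. Then there exists $C_q > 0$ such that for all $\lambda = \mu + i\nu$ with $0 < |\mu| \leq 1$ and $\nu \in \mathbb{R}$, $\Big\| \frac{1}{U + i\lambda} \Big\|_{L^q(-1,1)} \leq C_q |\mu|^{-1 + 1/q}$. -/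
open MeasureTheory Set

/-- for `U ∈ C¹([-1,1])` with `U' ≥ m > 0` and `q > 1`, there is
`C_q > 0` such that for all `λ = μ + iν` with `0 < |μ| ≤ 1` and `ν ∈ ℝ`,
`‖1/(U+iλ)‖_{L^q(-1,1)} ≤ C_q |μ|^{-1+1/q}`; here
`|U(x)+iλ|^q = ((U(x)-ν)² + μ²)^{q/2}`. -/
theorem stmt4 (U U' : ℝ → ℝ) (m : ℝ) (hm : 0 < m)
    (hU : ∀ x ∈ Set.Icc (-1:ℝ) 1, HasDerivWithinAt U (U' x) (Set.Icc (-1:ℝ) 1) x)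
    (hU'c : ContinuousOn U' (Set.Icc (-1:ℝ) 1))
    (hU'm : ∀ x ∈ Set.Icc (-1:ℝ) 1, m ≤ U' x)
    (q : ℝ) (hq : 1 < q) :
    ∃ C > 0, ∀ μ ν : ℝ, 0 < |μ| → |μ| ≤ 1 →
      (∫ x in (-1:ℝ)..1, ((U x - ν) ^ 2 + μ ^ 2) ^ (-(q / 2))) ^ (1 / q)
        ≤ C * |μ| ^ (-1 + 1 / q) := by
  have hq0 : 0 < q := by linarith
  -- the model integral
  set h₀ : ℝ → ℝ := fun t => (1 + t ^ 2) ^ (-(q / 2)) with hh₀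
  have h₀_int : Integrable h₀ := by
    have := integrable_rpow_neg_one_add_norm_sq (E := ℝ) (μ := volume) (r := q)
      (by simpa using hq)
    simpa [hh₀, sq_abs, neg_div] using this
  set I : ℝ := ∫ t : ℝ, h₀ t with hI
  have hI0 : 0 ≤ I := integral_nonneg fun t => Real.rpow_nonneg (by positivity) _
  set K : ℝ := m⁻¹ * I with hK
  have hK0 : 0 ≤ K := by positivity
  refine ⟨K ^ (1/q) + 1, by positivity, fun μ ν hμ hμ1 => ?_⟩
  have hμne : μ ≠ 0 := by simpa [abs_pos] using hμ
  have hμa : (0:ℝ) < |μ| := hμ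
  set g : ℝ → ℝ := fun y => ((y - ν) ^ 2 + μ ^ 2) ^ (-(q / 2)) with hg
  have hgpos : ∀ y, 0 < (y - ν) ^ 2 + μ ^ 2 := fun y => by positivity
  have hgc : Continuous g := by
    apply Continuous.rpow_const (by fun_prop)
    exact fun y => Or.inl (hgpos y).ne'
  have hgnn : ∀ y, 0 ≤ g y := fun y => Real.rpow_nonneg (hgpos y).le _
  have hUc : ContinuousOn U (Set.Icc (-1:ℝ) 1) := fun x hx =>
    (hU x hx).continuousWithinAt
  -- key scaling identity
  have key : ∀ y : ℝ, g y = |μ| ^ (-q) * h₀ ((y - ν) * |μ|⁻¹) := by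
    intro y
    show ((y - ν) ^ 2 + μ ^ 2) ^ (-(q / 2)) = _
    have habs : |μ| ^ (2:ℕ) = μ ^ 2 := sq_abs μ
    have h1 : |μ| ^ (-q) = (μ ^ 2) ^ (-(q/2)) := by
      rw [← habs, ← Real.rpow_natCast |μ| 2, ← Real.rpow_mul (abs_nonneg μ)]
      norm_num
      congr 1
      ring
    rw [hh₀, h1, ← Real.mul_rpow (by positivity) (by positivity)]
    congr 1
    have : (|μ|⁻¹) ^ 2 = (μ ^ 2)⁻¹ := by rw [← habs]; push_cast; rw [inv_pow]
    beta_reduce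
    have hμ2 : μ ^ 2 ≠ 0 := by positivity
    rw [mul_pow, this, mul_add, mul_one, mul_left_comm, mul_inv_cancel₀ hμ2, mul_one, add_comm]
  -- integrability of g on ℝ
  have hg_int : Integrable g := by
    have h1 : Integrable (fun y : ℝ => h₀ (y * |μ|⁻¹)) :=
      h₀_int.comp_mul_right' (inv_ne_zero (abs_ne_zero.2 hμne))
    have h2 : Integrable (fun y : ℝ => h₀ ((y - ν) * |μ|⁻¹)) := h1.comp_sub_right ν
    rw [show g = fun y => |μ| ^ (-q) * h₀ ((y - ν) * |μ|⁻¹) from funext key]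
    exact h2.const_mul _
  -- value of ∫ g over ℝ
  have hg_val : (∫ y : ℝ, g y) = |μ| ^ (-q) * (|μ| * I) := by
    simp_rw [key]
    rw [MeasureTheory.integral_const_mul]
    congr 1
    have h3 : (∫ y : ℝ, h₀ ((y - ν) * |μ|⁻¹)) = ∫ y : ℝ, h₀ (y * |μ|⁻¹) := by
      exact integral_sub_right_eq_self (fun y => h₀ (y * |μ|⁻¹)) ν
    rw [h3, Measure.integral_comp_inv_mul_right h₀ |μ|]
    simp [abs_of_pos hμa, smul_eq_mul, hI]
  -- basic interval facts
  have huIcc : Set.uIcc (-1:ℝ) 1 = Set.Icc (-1:ℝ) 1 := uIcc_of_le (by norm_num)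
  have hgcU : ContinuousOn (fun x => g (U x)) (Set.Icc (-1:ℝ) 1) :=
    hgc.comp_continuousOn hUc
  have int1 : IntervalIntegrable (fun x => g (U x)) volume (-1) 1 := by
    rw [intervalIntegrable_iff_integrableOn_Icc_of_le (by norm_num)]
    exact hgcU.integrableOn_compact isCompact_Icc
  have int2 : IntervalIntegrable (fun x => m⁻¹ * (U' x * g (U x))) volume (-1) 1 := by
    rw [intervalIntegrable_iff_integrableOn_Icc_of_le (by norm_num)]
    exact (((hU'c.mul hgcU)).const_smul m⁻¹).integrableOn_compact isCompact_Icc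
  -- right-derivative hypothesis
  have hff' : ∀ x ∈ Set.Ioo (-1:ℝ) 1, HasDerivWithinAt U (U' x) (Set.Ioi x) x := by
    intro x hx
    refine (hU x (Ioo_subset_Icc_self hx)).mono_of_mem_nhdsWithin ?_
    exact mem_nhdsWithin_of_mem_nhds (Icc_mem_nhds hx.1 hx.2)
  -- monotonicity : U (-1) ≤ U 1
  have hU'int : IntervalIntegrable U' volume (-1) 1 := by
    rw [intervalIntegrable_iff_integrableOn_Icc_of_le (by norm_num)]
    exact hU'c.integrableOn_compact isCompact_Icc
  have hmono : U (-1) ≤ U 1 := by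
    have hsub := intervalIntegral.integral_eq_sub_of_hasDeriv_right_of_le (by norm_num)
      (huIcc ▸ hUc) hff' hU'int
    have hpos : (0:ℝ) ≤ ∫ x in (-1:ℝ)..1, U' x :=
      intervalIntegral.integral_nonneg (by norm_num)
        (fun x hx => le_trans hm.le (hU'm x hx))
    linarith [hsub, hpos]
  -- Step A : pointwise comparison
  have stepA : (∫ x in (-1:ℝ)..1, g (U x))
      ≤ ∫ x in (-1:ℝ)..1, m⁻¹ * (U' x * g (U x)) := by
    refine intervalIntegral.integral_mono_on (by norm_num) int1 int2 ?_
    intro x hx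
    have h1 : 1 ≤ m⁻¹ * U' x := by
      rw [inv_mul_eq_div, le_div_iff₀ hm]
      simpa using hU'm x hx
    calc g (U x) = 1 * g (U x) := (one_mul _).symm
      _ ≤ (m⁻¹ * U' x) * g (U x) := mul_le_mul_of_nonneg_right h1 (hgnn _)
      _ = m⁻¹ * (U' x * g (U x)) := by ring
  -- Step B : change of variables
  have stepB : (∫ x in (-1:ℝ)..1, U' x * g (U x)) = ∫ u in (U (-1))..(U 1), g u := by
    have := intervalIntegral.integral_comp_smul_deriv'' (f := U) (f' := U') (g := g)
      (a := -1) (b := 1) (huIcc ▸ hUc) (by simpa using hff')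
      (huIcc ▸ hU'c) hgc.continuousOn
    simpa [smul_eq_mul, Function.comp] using this
  -- Step C : upper bound by the full-line integral
  have stepC : (∫ u in (U (-1))..(U 1), g u) ≤ ∫ y : ℝ, g y := by
    rw [intervalIntegral.integral_of_le hmono]
    exact setIntegral_le_integral hg_int (ae_of_all _ hgnn)
  -- combine
  have hJ : (∫ x in (-1:ℝ)..1, g (U x)) ≤ K * |μ| ^ (1 - q) := by
    have h2 : (∫ x in (-1:ℝ)..1, m⁻¹ * (U' x * g (U x)))
        = m⁻¹ * ∫ x in (-1:ℝ)..1, U' x * g (U x) := by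
      rw [intervalIntegral.integral_const_mul]
    have hpow : |μ| ^ (-q) * (|μ| * I) = I * |μ| ^ (1 - q) := by
      have h4 := Real.rpow_add hμa (-q) 1
      rw [Real.rpow_one] at h4
      rw [show |μ| ^ (-q) * (|μ| * I) = (|μ| ^ (-q) * |μ|) * I by ring, ← h4,
        show -q + 1 = 1 - q by ring]
      ring
    calc (∫ x in (-1:ℝ)..1, g (U x))
        ≤ ∫ x in (-1:ℝ)..1, m⁻¹ * (U' x * g (U x)) := stepA
      _ = m⁻¹ * ∫ x in (-1:ℝ)..1, U' x * g (U x) := h2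
      _ = m⁻¹ * ∫ u in (U (-1))..(U 1), g u := by rw [stepB]
      _ ≤ m⁻¹ * ∫ y : ℝ, g y := by
          exact mul_le_mul_of_nonneg_left stepC (by positivity)
      _ = m⁻¹ * (|μ| ^ (-q) * (|μ| * I)) := by rw [hg_val]
      _ = m⁻¹ * (I * |μ| ^ (1 - q)) := by rw [hpow]
      _ = K * |μ| ^ (1 - q) := by rw [hK]; ring
  have hJnn : 0 ≤ ∫ x in (-1:ℝ)..1, g (U x) :=
    intervalIntegral.integral_nonneg (by norm_num) (fun x _ => hgnn (U x))
  have hfin : (∫ x in (-1:ℝ)..1, g (U x)) ^ (1/q)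
      ≤ K ^ (1/q) * |μ| ^ (-1 + 1/q) := by
    calc (∫ x in (-1:ℝ)..1, g (U x)) ^ (1/q)
        ≤ (K * |μ| ^ (1 - q)) ^ (1/q) :=
          Real.rpow_le_rpow hJnn hJ (by positivity)
      _ = K ^ (1/q) * (|μ| ^ (1 - q)) ^ (1/q) :=
          Real.mul_rpow hK0 (Real.rpow_nonneg (abs_nonneg μ) _)
      _ = K ^ (1/q) * |μ| ^ ((1 - q) * (1/q)) := by
          rw [← Real.rpow_mul (abs_nonneg μ)]
      _ = K ^ (1/q) * |μ| ^ (-1 + 1/q) := by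
          congr 1
          field_simp
          ring
  calc (∫ x in (-1:ℝ)..1, g (U x)) ^ (1/q) ≤ K ^ (1/q) * |μ| ^ (-1 + 1/q) := hfin
    _ ≤ (K ^ (1/q) + 1) * |μ| ^ (-1 + 1/q) := by
        apply mul_le_mul_of_nonneg_right (by linarith) (Real.rpow_nonneg (abs_nonneg μ) _)
end

section
/- Let $U \in C^1([-1,1])$ be real-valued with $U' \geq m > 0$ on $[-1,1]$. Then there exists $C > 0$ such that for all $\lambda = \mu + i\nu$ with $0 < |\mu| \leq 1/2$ and $\nu \in \mathbb{R}$, $\Big\| \frac{1}{U + i\lambda} \Big\|_{L^1(-1,1)} \leq C \log(|\mu|^{-1})$. -/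
open MeasureTheory Set

private lemma one_le_sqrt_one_add_sq (x : ℝ) : 1 ≤ Real.sqrt (1 + x ^ 2) := by
  nlinarith [Real.sq_sqrt (show (0:ℝ) ≤ 1 + x ^ 2 by positivity),
    Real.sqrt_nonneg (1 + x ^ 2)]

private lemma sqrt_one_add_sq_le (x : ℝ) (hx : 0 ≤ x) : Real.sqrt (1 + x ^ 2) ≤ 1 + x := by
  rw [show (1:ℝ) + x ^ 2 = (1+x)^2 - 2*x by ring]
  calc Real.sqrt ((1+x)^2 - 2*x) ≤ Real.sqrt ((1+x)^2) := by
        apply Real.sqrt_le_sqrt; nlinarith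
    _ = 1 + x := Real.sqrt_sq (by linarith)

private lemma arsinh_pos_term (x : ℝ) (hx : 0 ≤ x) : (1:ℝ) ≤ x + Real.sqrt (1 + x ^ 2) := by
  nlinarith [one_le_sqrt_one_add_sq x]

private lemma arsinh_le_log (x : ℝ) (hx : 0 ≤ x) : Real.arsinh x ≤ Real.log (1 + 2*x) := by
  rw [Real.arsinh]
  apply Real.log_le_log (by nlinarith [one_le_sqrt_one_add_sq x, Real.sqrt_nonneg (1+x^2)])
  nlinarith [sqrt_one_add_sq_le x hx]

private lemma log_le_two_arsinh (x : ℝ) (hx : 0 ≤ x) : Real.log (1 + 2*x) ≤ 2 * Real.arsinh x := by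
  rw [Real.arsinh, show 2 * Real.log (x + Real.sqrt (1+x^2)) = Real.log ((x + Real.sqrt (1+x^2))^2) by
    rw [Real.log_pow]; push_cast; ring]
  apply Real.log_le_log (by linarith)
  have h1 := one_le_sqrt_one_add_sq x
  have h2 : Real.sqrt (1+x^2) ^ 2 = 1 + x ^ 2 := Real.sq_sqrt (by positivity)
  nlinarith

private lemma arsinh_sub_le_aux (q h : ℝ) (hq : 0 ≤ q) (hh : 0 ≤ h) :
    Real.arsinh (q + h) - Real.arsinh q ≤ 2 * Real.arsinh h := by
  have hB1 : (1:ℝ) ≤ q + Real.sqrt (1 + q ^ 2) := arsinh_pos_term q hq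
  have hA1 : (1:ℝ) ≤ q + h + Real.sqrt (1 + (q+h) ^ 2) := by
    have := arsinh_pos_term (q+h) (by linarith); linarith
  have key : Real.arsinh (q + h) - Real.arsinh q ≤ Real.log (1 + 2*h) := by
    rw [Real.arsinh, Real.arsinh, ← Real.log_div (by linarith) (by linarith)]
    apply Real.log_le_log (by positivity)
    rw [div_le_iff₀ (by linarith)]
    have hsq : Real.sqrt (1 + (q+h) ^ 2) ≤ Real.sqrt (1 + q^2) + h := by
      calc Real.sqrt (1 + (q+h)^2) ≤ Real.sqrt ((Real.sqrt (1+q^2) + h)^2) := by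
            apply Real.sqrt_le_sqrt
            have h2 : Real.sqrt (1+q^2) ^ 2 = 1 + q ^ 2 := Real.sq_sqrt (by positivity)
            have hq' : q ≤ Real.sqrt (1+q^2) := by
              nlinarith [one_le_sqrt_one_add_sq q, Real.sqrt_nonneg (1+q^2)]
            nlinarith
        _ = Real.sqrt (1+q^2) + h := Real.sqrt_sq (by positivity)
    nlinarith
  calc Real.arsinh (q + h) - Real.arsinh q ≤ Real.log (1 + 2*h) := key
    _ ≤ 2 * Real.arsinh h := log_le_two_arsinh h hh

private lemma arsinh_sub_le (q h : ℝ) (hh : 0 ≤ h) :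
    Real.arsinh (q + h) - Real.arsinh q ≤ 2 * Real.arsinh h := by
  rcases le_or_gt 0 q with hq | hq
  · exact arsinh_sub_le_aux q h hq hh
  rcases le_or_gt (q + h) 0 with hqh | hqh
  · have := arsinh_sub_le_aux (-(q+h)) h (by linarith) hh
    rw [show -(q+h) + h = -q by ring, Real.arsinh_neg, Real.arsinh_neg] at this
    linarith
  · have h1 : Real.arsinh (q + h) ≤ Real.arsinh h := Real.arsinh_le_arsinh.mpr (by linarith)
    have h2 : Real.arsinh (-q) ≤ Real.arsinh h := Real.arsinh_le_arsinh.mpr (by linarith)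
    rw [Real.arsinh_neg] at h2
    linarith

private lemma cont_inv_sqrt (c : ℝ) (hc : 0 < c) :
    Continuous (fun t : ℝ => 1 / Real.sqrt (t ^ 2 + c ^ 2)) := by
  apply continuous_const.div (by fun_prop)
  intro t
  exact ne_of_gt (Real.sqrt_pos.mpr (by positivity))

private lemma antideriv_lemma (c : ℝ) (hc : 0 < c) (a b : ℝ) :
    ∫ t in a..b, 1 / Real.sqrt (t ^ 2 + c ^ 2)
      = Real.arsinh (b / c) - Real.arsinh (a / c) := by
  apply intervalIntegral.integral_eq_sub_of_hasDerivAt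
  · intro t ht
    have h1 : HasDerivAt (fun t : ℝ => t / c) (1 / c) t := by
      simpa using (hasDerivAt_id t).div_const c
    have h2 := (Real.hasDerivAt_arsinh (t / c)).comp t h1
    refine h2.congr_deriv ?_
    have e1 : 1 + (t / c) ^ 2 = (t ^ 2 + c ^ 2) / c ^ 2 := by field_simp; ring
    have e2 : Real.sqrt (1 + (t / c) ^ 2) = Real.sqrt (t ^ 2 + c ^ 2) / c := by
      rw [e1, Real.sqrt_div (by positivity), Real.sqrt_sq hc.le]
    rw [e2]
    have h3 : Real.sqrt (t ^ 2 + c ^ 2) ≠ 0 := ne_of_gt (Real.sqrt_pos.mpr (by positivity))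
    field_simp
  · exact ((cont_inv_sqrt c hc).intervalIntegrable a b)

theorem test : True := trivial

/-- for `U ∈ C¹([-1,1])` with `U' ≥ m > 0`, there is `C > 0` such
that for all `λ = μ + iν` with `0 < |μ| ≤ 1/2` and `ν ∈ ℝ`,
`‖1/(U+iλ)‖_{L¹(-1,1)} ≤ C log(|μ|⁻¹)`, where `|U(x)+iλ| = √((U(x)-ν)² + μ²)`. -/
theorem stmt5 (U U' : ℝ → ℝ) (m : ℝ) (hm : 0 < m)
    (hU : ∀ x ∈ Set.Icc (-1:ℝ) 1, HasDerivWithinAt U (U' x) (Set.Icc (-1:ℝ) 1) x)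
    (hU'c : ContinuousOn U' (Set.Icc (-1:ℝ) 1))
    (hU'm : ∀ x ∈ Set.Icc (-1:ℝ) 1, m ≤ U' x) :
    ∃ C > 0, ∀ μ ν : ℝ, 0 < |μ| → |μ| ≤ 1 / 2 →
      ∫ x in (-1:ℝ)..1, 1 / Real.sqrt ((U x - ν) ^ 2 + μ ^ 2)
        ≤ C * Real.log (|μ|⁻¹) := by
  have hIcc : Set.uIcc (-1:ℝ) 1 = Set.Icc (-1:ℝ) 1 := Set.uIcc_of_le (by norm_num)
  have hUc : ContinuousOn U (Set.Icc (-1:ℝ) 1) := fun x hx => (hU x hx).continuousWithinAt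
  have hintIcc : interior (Set.Icc (-1:ℝ) 1) = Set.Ioo (-1:ℝ) 1 := interior_Icc
  have hmono : StrictMonoOn U (Set.Icc (-1:ℝ) 1) := by
    apply strictMonoOn_of_hasDerivWithinAt_pos (convex_Icc _ _) hUc
    · intro x hx
      rw [hintIcc] at hx ⊢
      exact (hU x (Set.Ioo_subset_Icc_self hx)).mono Set.Ioo_subset_Icc_self
    · intro x hx
      rw [hintIcc] at hx
      exact lt_of_lt_of_le hm (hU'm x (Set.Ioo_subset_Icc_self hx))
  have hab : U (-1) ≤ U 1 :=
    (hmono (by norm_num [Set.mem_Icc]) (by norm_num [Set.mem_Icc]) (by norm_num)).le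
  set L : ℝ := U 1 - U (-1) with hLdef
  have hL : 0 ≤ L := by simp [hLdef]; linarith
  set K : ℝ := Real.log (1 + 2 * L) with hKdef
  have hlog2 : 0 < Real.log 2 := Real.log_pos (by norm_num)
  have hK : 0 ≤ K := Real.log_nonneg (by linarith)
  refine ⟨(2 / m) * (1 + K / Real.log 2), by positivity, ?_⟩
  intro μ ν hμ hμ2
  set c : ℝ := |μ| with hcdef
  have hc : 0 < c := hμ
  have hcne : c ≠ 0 := ne_of_gt hc
  have hμsq : μ ^ 2 = c ^ 2 := (sq_abs μ).symm
  set g : ℝ → ℝ := fun t => 1 / Real.sqrt (t ^ 2 + c ^ 2) with hgdef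
  have hgc : Continuous g := cont_inv_sqrt c hc
  have hgν : Continuous (fun y : ℝ => g (y - ν)) := hgc.comp (by fun_prop)
  have hgnonneg : ∀ t, 0 ≤ g t := fun t => by positivity
  -- rewrite integrand
  have hrw : ∀ x : ℝ, 1 / Real.sqrt ((U x - ν) ^ 2 + μ ^ 2) = g (U x - ν) := by
    intro x; rw [hμsq]
  simp_rw [hrw]
  set I : ℝ := ∫ x in (-1:ℝ)..1, g (U x - ν) with hIdef
  -- step A : m * I ≤ ∫ U' * g(U x - ν)
  have hcompc : ContinuousOn (fun x => g (U x - ν)) (Set.Icc (-1:ℝ) 1) :=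
    hgν.comp_continuousOn hUc
  have int1 : IntervalIntegrable (fun x => m * g (U x - ν)) volume (-1:ℝ) 1 := by
    apply ContinuousOn.intervalIntegrable
    rw [hIcc]; exact continuousOn_const.mul hcompc
  have int2 : IntervalIntegrable (fun x => U' x * g (U x - ν)) volume (-1:ℝ) 1 := by
    apply ContinuousOn.intervalIntegrable
    rw [hIcc]; exact hU'c.mul hcompc
  have stepA : m * I ≤ ∫ x in (-1:ℝ)..1, U' x * g (U x - ν) := by
    rw [hIdef, ← intervalIntegral.integral_const_mul]
    apply intervalIntegral.integral_mono_on (by norm_num) int1 int2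
    intro x hx
    exact mul_le_mul_of_nonneg_right (hU'm x hx) (hgnonneg _)
  -- step B : substitution
  have stepB : (∫ x in (-1:ℝ)..1, U' x * g (U x - ν))
      = ∫ y in (U (-1))..(U 1), g (y - ν) := by
    have := intervalIntegral.integral_comp_smul_deriv''
      (f := U) (f' := U') (g := fun y => g (y - ν)) (a := (-1:ℝ)) (b := 1)
      (by rw [hIcc]; exact hUc)
      (by
        intro x hx
        rw [show (min (-1:ℝ) 1) = -1 by norm_num, show (max (-1:ℝ) 1) = 1 by norm_num] at hx
        have h1 : Set.Icc (-1:ℝ) 1 ∈ nhds x := Icc_mem_nhds hx.1 hx.2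
        exact ((hU x (Set.Ioo_subset_Icc_self hx)).hasDerivAt h1).hasDerivWithinAt)
      (by rw [hIcc]; exact hU'c)
      (hgν.continuousOn)
    simpa [smul_eq_mul, Function.comp] using this
  -- step C : shift
  have stepC : (∫ y in (U (-1))..(U 1), g (y - ν))
      = ∫ t in (U (-1) - ν)..(U 1 - ν), g t :=
    intervalIntegral.integral_comp_sub_right g ν
  -- step D : antiderivative & arsinh bound
  have stepD : (∫ t in (U (-1) - ν)..(U 1 - ν), g t) ≤ 2 * Real.arsinh (L / c) := by
    rw [hgdef, antideriv_lemma c hc]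
    have hq : (U 1 - ν) / c = (U (-1) - ν) / c + L / c := by
      rw [hLdef]; field_simp; ring
    rw [hq]
    exact arsinh_sub_le ((U (-1) - ν) / c) (L / c) (by positivity)
  -- step E : arsinh(L/c) ≤ (1 + K/log 2) * log c⁻¹
  have h2c : (2:ℝ) ≤ c⁻¹ := by
    have h1 : c * c⁻¹ = 1 := mul_inv_cancel₀ hcne
    nlinarith [inv_pos.mpr hc]
  have hlogc : Real.log 2 ≤ Real.log c⁻¹ := Real.log_le_log (by norm_num) h2c
  have hlogcpos : 0 < Real.log c⁻¹ := lt_of_lt_of_le hlog2 hlogc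
  have stepE : Real.arsinh (L / c) ≤ (1 + K / Real.log 2) * Real.log c⁻¹ := by
    have e1 := arsinh_le_log (L / c) (by positivity)
    have e2 : 1 + 2 * (L / c) ≤ (1 + 2 * L) / c := by
      rw [le_div_iff₀ hc]
      have : (1 + 2 * (L / c)) * c = c + 2 * L := by field_simp
      rw [this]; linarith
    have e3 : Real.log (1 + 2 * (L / c)) ≤ Real.log ((1 + 2 * L) / c) :=
      Real.log_le_log (by positivity) e2
    have e4 : Real.log ((1 + 2 * L) / c) = K + Real.log c⁻¹ := by
      rw [Real.log_div (by linarith) hcne, Real.log_inv, hKdef]; ring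
    have e6 : K ≤ (K / Real.log 2) * Real.log c⁻¹ := by
      have := mul_le_mul_of_nonneg_left hlogc (div_nonneg hK hlog2.le)
      calc K = (K / Real.log 2) * Real.log 2 := by field_simp
        _ ≤ (K / Real.log 2) * Real.log c⁻¹ := this
    calc Real.arsinh (L / c) ≤ Real.log (1 + 2 * (L / c)) := e1
      _ ≤ Real.log ((1 + 2 * L) / c) := e3
      _ = K + Real.log c⁻¹ := e4
      _ ≤ (K / Real.log 2) * Real.log c⁻¹ + Real.log c⁻¹ := by linarith
      _ = (1 + K / Real.log 2) * Real.log c⁻¹ := by ring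
  -- final assembly
  have hfin : m * I ≤ 2 * ((1 + K / Real.log 2) * Real.log c⁻¹) := by
    calc m * I ≤ ∫ x in (-1:ℝ)..1, U' x * g (U x - ν) := stepA
      _ = ∫ t in (U (-1) - ν)..(U 1 - ν), g t := by rw [stepB, stepC]
      _ ≤ 2 * Real.arsinh (L / c) := stepD
      _ ≤ 2 * ((1 + K / Real.log 2) * Real.log c⁻¹) := by linarith
  calc I = (m * I) / m := by field_simp
    _ ≤ (2 * ((1 + K / Real.log 2) * Real.log c⁻¹)) / m := by
        gcongr
    _ = 2 / m * (1 + K / Real.log 2) * Real.log c⁻¹ := by field_simp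
end

section
/- Let $U \in C^1([-1,1])$ be real-valued with $U' \geq m > 0$ and let $\nu_0 \in [U(-1), U(1)]$. Then there exists $C > 0$ such that for all $\lambda = \mu + i\nu$ with $0 < |\lambda - i\nu_0| \leq 1/2$ and $\mu \neq 0$, $\Big\| \log \frac{U + i\lambda}{U - \nu_0} \Big\|_{L^2(-1,1)} \leq C |\lambda - i\nu_0|^{1/2} \log\big(|\lambda - i\nu_0|^{-1}\big)$. -/
open MeasureTheory Set ENNReal

lemma lint_cov {s : Set ℝ} {f f' : ℝ → ℝ} (hs : MeasurableSet s)
    (hf' : ∀ x ∈ s, HasDerivWithinAt f (f' x) s x) (hf : InjOn f s) (g : ℝ → ℝ≥0∞) :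
    ∫⁻ x in f '' s, g x = ∫⁻ x in s, ENNReal.ofReal |f' x| * g (f x) := by
  simpa only [ContinuousLinearMap.det_toSpanSingleton] using
    lintegral_image_eq_lintegral_abs_det_fderiv_mul volume hs
      (fun x hx => (hf' x hx).hasFDerivWithinAt) hf g

lemma lint_cov_le {s : Set ℝ} {f f' : ℝ → ℝ} {m : ℝ} (hm : 0 < m) (hs : MeasurableSet s)
    (hf' : ∀ x ∈ s, HasDerivWithinAt f (f' x) s x) (hf : InjOn f s)
    (hm' : ∀ x ∈ s, m ≤ f' x) (g : ℝ → ℝ≥0∞) :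
    ∫⁻ x in s, g (f x) ≤ (ENNReal.ofReal m)⁻¹ * ∫⁻ y in f '' s, g y := by
  rw [lint_cov hs hf' hf g, ← lintegral_const_mul' _ _ (by simpa using hm)]
  refine setLIntegral_mono' hs (fun x hx => ?_)
  have h1 : ENNReal.ofReal m ≤ ENNReal.ofReal |f' x| :=
    ENNReal.ofReal_le_ofReal ((hm' x hx).trans (le_abs_self _))
  calc g (f x) = (ENNReal.ofReal m)⁻¹ * (ENNReal.ofReal m * g (f x)) := by
        rw [← mul_assoc, ENNReal.inv_mul_cancel (by simpa using hm) ofReal_ne_top, one_mul]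
    _ ≤ (ENNReal.ofReal m)⁻¹ * (ENNReal.ofReal |f' x| * g (f x)) := by
        gcongr

lemma invsq_deriv {c s : ℝ} (hs : s ≠ c) :
    HasDerivAt (fun u => -(u - c)⁻¹) (((s - c)^2)⁻¹) s := by
  have h1 : HasDerivAt (fun u : ℝ => u - c) 1 s := (hasDerivAt_id s).sub_const c
  have h2 := (h1.inv (sub_ne_zero.mpr hs)).neg
  convert h2 using 1
  · rfl
  · rfl
  · rfl
  · rw [neg_div, neg_neg, one_div]

lemma K2aux {l r c : ℝ} (hlr : l ≤ r) (hc : ∀ x ∈ Icc l r, x ≠ c) :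
    ∫⁻ s in Icc l r, ENNReal.ofReal (((s - c)^2)⁻¹)
      = ENNReal.ofReal ((l - c)⁻¹ - (r - c)⁻¹) := by
  have hcont : ContinuousOn (fun s => ((s - c)^2)⁻¹) (Icc l r) := by
    apply ContinuousOn.inv₀ (by fun_prop)
    intro x hx
    exact pow_ne_zero _ (sub_ne_zero.mpr (hc x hx))
  have hint : IntegrableOn (fun s => ((s - c)^2)⁻¹) (Icc l r) := hcont.integrableOn_Icc
  rw [← ofReal_integral_eq_lintegral_ofReal hint
      (Filter.Eventually.of_forall (fun x => by positivity))]
  congr 1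
  rw [MeasureTheory.integral_Icc_eq_integral_Ioc, ← intervalIntegral.integral_of_le hlr]
  rw [intervalIntegral.integral_eq_sub_of_hasDerivAt (fun x hx => invsq_deriv
      (hc x (by rwa [uIcc_of_le hlr] at hx)))
      (by rw [intervalIntegrable_iff_integrableOn_Icc_of_le hlr]; exact hint)]
  ring

lemma K2r {c a b : ℝ} (h0 : 0 < a) (hab : a ≤ b) :
    ∫⁻ s in Icc (c+a) (c+b), ENNReal.ofReal (((s - c)^2)⁻¹) ≤ ENNReal.ofReal a⁻¹ := by
  rw [K2aux (by linarith) (fun x hx => by rcases hx with ⟨h1, h2⟩; intro h; simp [h] at h1 h2; linarith)]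
  apply ENNReal.ofReal_le_ofReal
  have hb : 0 < b := h0.trans_le hab
  have hbi : 0 < b⁻¹ := by positivity
  simp only [add_sub_cancel_left]
  linarith

lemma K2l {c a b : ℝ} (h0 : 0 < a) (hab : a ≤ b) :
    ∫⁻ s in Icc (c-b) (c-a), ENNReal.ofReal (((s - c)^2)⁻¹) ≤ ENNReal.ofReal a⁻¹ := by
  rw [K2aux (by linarith) (fun x hx => by rcases hx with ⟨h1, h2⟩; intro h; simp [h] at h1 h2; linarith)]
  apply ENNReal.ofReal_le_ofReal
  have h1 : c - b - c = -b := by ring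
  have h2 : c - a - c = -a := by ring
  rw [h1, h2]
  have hb : 0 < b := lt_of_lt_of_le h0 hab
  rw [inv_neg, inv_neg]
  have : 0 < b⁻¹ := by positivity
  linarith

lemma logsq_le {u : ℝ} (h0 : 0 < u) (h1 : u ≤ 1) :
    (Real.log u)^2 ≤ 16 * u ^ (-(1/2) : ℝ) := by
  set y := u ^ (-(1/4) : ℝ) with hy
  have hy0 : 0 < y := Real.rpow_pos_of_pos h0 _
  have hlogy : Real.log y = -(1/4) * Real.log u := Real.log_rpow h0 _
  have h2 : Real.log y ≤ y := (Real.log_le_sub_one_of_pos hy0).trans (by linarith)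
  have hyy : y * y = u ^ (-(1/2) : ℝ) := by
    rw [hy, ← Real.rpow_add h0]; norm_num
  have hlogu : Real.log u ≤ 0 := Real.log_nonpos h0.le h1
  nlinarith [sq_nonneg (Real.log u), sq_nonneg y]

lemma K1_half_r {c b : ℝ} (hb : 0 < b) :
    ∫⁻ s in Icc c (c+b), ENNReal.ofReal (|s - c| ^ (-(1/2):ℝ))
      ≤ ENNReal.ofReal (2 * Real.sqrt b) := by
  have hii : IntervalIntegrable (fun s => (s - c) ^ (-(1/2):ℝ)) volume c (c+b) := by
    have := (intervalIntegral.intervalIntegrable_rpow'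
      (a := 0) (b := b) (by norm_num : (-1:ℝ) < -(1/2))).comp_sub_right c
    simpa [add_comm] using this
  have hint : IntegrableOn (fun s => (s - c) ^ (-(1/2):ℝ)) (Icc c (c+b)) := by
    rw [integrableOn_Icc_iff_integrableOn_Ioc]
    exact (intervalIntegrable_iff_integrableOn_Ioc_of_le (by linarith)).mp hii
  have heq : ∀ s ∈ Icc c (c+b), ENNReal.ofReal (|s - c| ^ (-(1/2):ℝ))
      = ENNReal.ofReal ((s - c) ^ (-(1/2):ℝ)) := by
    intro s hs; rw [abs_of_nonneg (by linarith [hs.1])]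
  rw [setLIntegral_congr_fun measurableSet_Icc heq]
  rw [← ofReal_integral_eq_lintegral_ofReal hint ((ae_restrict_iff' measurableSet_Icc).mpr
      (Filter.Eventually.of_forall (fun x hx => Real.rpow_nonneg (by linarith [hx.1]) _)))]
  apply ENNReal.ofReal_le_ofReal
  rw [MeasureTheory.integral_Icc_eq_integral_Ioc, ← intervalIntegral.integral_of_le (by linarith)]
  have : (∫ s in c..(c+b), (s - c) ^ (-(1/2):ℝ)) = ∫ x in (0:ℝ)..b, x ^ (-(1/2):ℝ) := by
    have h := intervalIntegral.integral_comp_sub_right (a := c) (b := c+b)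
      (fun x : ℝ => x ^ (-(1/2):ℝ)) c
    simpa using h
  rw [this, integral_rpow (Or.inl (by norm_num))]
  rw [Real.zero_rpow (by norm_num), Real.sqrt_eq_rpow]
  exact le_of_eq (by ring)

lemma K1_half_l {c b : ℝ} (hb : 0 < b) :
    ∫⁻ s in Icc (c-b) c, ENNReal.ofReal (|s - c| ^ (-(1/2):ℝ))
      ≤ ENNReal.ofReal (2 * Real.sqrt b) := by
  have hii : IntervalIntegrable (fun s => (c - s) ^ (-(1/2):ℝ)) volume (c-b) c := by
    have := (intervalIntegral.intervalIntegrable_rpow'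
      (a := 0) (b := b) (by norm_num : (-1:ℝ) < -(1/2))).comp_sub_left c
    simpa using this.symm
  have hint : IntegrableOn (fun s => (c - s) ^ (-(1/2):ℝ)) (Icc (c-b) c) := by
    rw [integrableOn_Icc_iff_integrableOn_Ioc]
    exact (intervalIntegrable_iff_integrableOn_Ioc_of_le (by linarith)).mp hii
  have heq : ∀ s ∈ Icc (c-b) c, ENNReal.ofReal (|s - c| ^ (-(1/2):ℝ))
      = ENNReal.ofReal ((c - s) ^ (-(1/2):ℝ)) := by
    intro s hs; rw [abs_sub_comm, abs_of_nonneg (by linarith [hs.2])]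
  rw [setLIntegral_congr_fun measurableSet_Icc heq]
  rw [← ofReal_integral_eq_lintegral_ofReal hint ((ae_restrict_iff' measurableSet_Icc).mpr
      (Filter.Eventually.of_forall (fun x hx => Real.rpow_nonneg (by linarith [hx.2]) _)))]
  apply ENNReal.ofReal_le_ofReal
  rw [MeasureTheory.integral_Icc_eq_integral_Ioc, ← intervalIntegral.integral_of_le (by linarith)]
  have : (∫ s in (c-b)..c, (c - s) ^ (-(1/2):ℝ)) = ∫ x in (0:ℝ)..b, x ^ (-(1/2):ℝ) := by
    have h := intervalIntegral.integral_comp_sub_left (a := c-b) (b := c)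
      (fun x : ℝ => x ^ (-(1/2):ℝ)) c
    simpa using h
  rw [this, integral_rpow (Or.inl (by norm_num))]
  rw [Real.zero_rpow (by norm_num), Real.sqrt_eq_rpow]
  exact le_of_eq (by ring)

lemma K1 {c b : ℝ} (hb : 0 < b) :
    ∫⁻ s in Icc (c-b) (c+b), ENNReal.ofReal ((Real.log |s-c|)^2)
      ≤ ENNReal.ofReal (4*b*(Real.log b)^2 + 128*b) := by
  have hpt : ∀ s ∈ Icc (c-b) (c+b), (Real.log |s-c|)^2
      ≤ 2*(Real.log b)^2 + 32 * Real.sqrt b * |s - c| ^ (-(1/2):ℝ) := by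
    intro s hs
    rcases eq_or_lt_of_le (abs_nonneg (s - c)) with h0 | h0
    · rw [← h0]
      simp [Real.log_zero]
      positivity
    · have hyb : |s - c| ≤ b := by
        rw [abs_le]; constructor <;> [linarith [hs.1]; linarith [hs.2]]
      have hu0 : 0 < |s - c| / b := by positivity
      have hu1 : |s - c| / b ≤ 1 := by rw [div_le_one hb]; exact hyb
      have hlog : Real.log |s - c| = Real.log b + Real.log (|s - c| / b) := by
        rw [Real.log_div (ne_of_gt h0) (ne_of_gt hb)]; ring
      have h16 := logsq_le hu0 hu1
      have hsplit : (|s - c| / b) ^ (-(1/2):ℝ)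
          = |s - c| ^ (-(1/2):ℝ) * Real.sqrt b := by
        rw [Real.div_rpow (abs_nonneg _) hb.le, Real.rpow_neg hb.le, Real.sqrt_eq_rpow,
          div_eq_mul_inv, inv_inv]
      rw [hsplit] at h16
      rw [hlog]
      nlinarith [h16, sq_nonneg (Real.log b - Real.log (|s-c|/b)),
        Real.sqrt_nonneg b, Real.rpow_nonneg (abs_nonneg (s-c)) (-(1/2):ℝ)]
  calc ∫⁻ s in Icc (c-b) (c+b), ENNReal.ofReal ((Real.log |s-c|)^2)
      ≤ ∫⁻ s in Icc (c-b) (c+b), (ENNReal.ofReal (2*(Real.log b)^2)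
          + ENNReal.ofReal (32 * Real.sqrt b * |s - c| ^ (-(1/2):ℝ))) := by
        refine setLIntegral_mono' measurableSet_Icc (fun s hs => ?_)
        rw [← ENNReal.ofReal_add (by positivity) (by positivity)]
        exact ENNReal.ofReal_le_ofReal (hpt s hs)
    _ = ENNReal.ofReal (2*(Real.log b)^2) * volume (Icc (c-b) (c+b))
        + ∫⁻ s in Icc (c-b) (c+b), ENNReal.ofReal (32 * Real.sqrt b * |s - c| ^ (-(1/2):ℝ)) := by
        rw [lintegral_add_left measurable_const, setLIntegral_const]
    _ ≤ ENNReal.ofReal (2*(Real.log b)^2) * ENNReal.ofReal (2*b)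
        + ENNReal.ofReal (32 * Real.sqrt b) * (ENNReal.ofReal (2 * Real.sqrt b)
          + ENNReal.ofReal (2 * Real.sqrt b)) := by
        gcongr
        · rw [Real.volume_Icc]
          exact ENNReal.ofReal_le_ofReal (by linarith)
        · calc ∫⁻ s in Icc (c-b) (c+b), ENNReal.ofReal (32 * Real.sqrt b * |s - c| ^ (-(1/2):ℝ))
              = ∫⁻ s in Icc (c-b) (c+b), ENNReal.ofReal (32 * Real.sqrt b)
                  * ENNReal.ofReal (|s - c| ^ (-(1/2):ℝ)) := by
                congr 1; ext s; rw [← ENNReal.ofReal_mul (by positivity)]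
            _ = ENNReal.ofReal (32 * Real.sqrt b)
                  * ∫⁻ s in Icc (c-b) (c+b), ENNReal.ofReal (|s - c| ^ (-(1/2):ℝ)) := by
                rw [lintegral_const_mul' _ _ ENNReal.ofReal_ne_top]
            _ ≤ ENNReal.ofReal (32 * Real.sqrt b) * (ENNReal.ofReal (2 * Real.sqrt b)
                  + ENNReal.ofReal (2 * Real.sqrt b)) := by
                gcongr
                have hsub : Icc (c-b) (c+b) = Icc (c-b) c ∪ Icc c (c+b) := by
                  rw [Icc_union_Icc_eq_Icc (by linarith) (by linarith)]
                rw [hsub]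
                exact le_trans (lintegral_union_le _ _ _)
                  (add_le_add (K1_half_l hb) (K1_half_r hb))
    _ ≤ ENNReal.ofReal (4*b*(Real.log b)^2 + 128*b) := by
        have e1 : ENNReal.ofReal (2*Real.sqrt b) + ENNReal.ofReal (2*Real.sqrt b)
            = ENNReal.ofReal (2*Real.sqrt b + 2*Real.sqrt b) :=
          (ENNReal.ofReal_add (by positivity) (by positivity)).symm
        rw [e1, ← ENNReal.ofReal_mul (by positivity), ← ENNReal.ofReal_mul (by positivity),
          ← ENNReal.ofReal_add (by positivity) (by positivity)]
        apply ENNReal.ofReal_le_ofReal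
        have hss : Real.sqrt b * Real.sqrt b = b := Real.mul_self_sqrt hb.le
        nlinarith [sq_nonneg (Real.log b), Real.sqrt_nonneg b]

lemma normlogsq (q : ℂ) : ‖Complex.log q‖^2
    = (Real.log ‖q‖)^2 + (Complex.arg q)^2 := by
  rw [Complex.sq_norm, Complex.normSq_apply, Complex.log_re,
    Complex.log_im]
  ring

lemma logsq_mono {q r : ℝ} (h0 : 0 < q) (hqr : q ≤ r) (hr : r ≤ 3/2) :
    (Real.log r)^2 ≤ 1/4 + (Real.log q)^2 := by
  rcases le_or_gt r 1 with h1 | h1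
  · have hlr : Real.log r ≤ 0 := Real.log_nonpos (by linarith) h1
    have hql : Real.log q ≤ Real.log r := Real.log_le_log h0 hqr
    nlinarith [sq_nonneg (Real.log q)]
  · have h2 : 0 ≤ Real.log r := Real.log_nonneg h1.le
    have h3 : Real.log r ≤ 1/2 := (Real.log_le_sub_one_of_pos (by linarith)).trans (by linarith)
    nlinarith [sq_nonneg (Real.log q)]

lemma absnum {t d μ : ℝ} :
    ‖(((t - d : ℝ) : ℂ) + Complex.I * (μ : ℂ) - ((t:ℝ):ℂ))‖
      = Real.sqrt (μ^2 + d^2) := by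
  have : (((t - d : ℝ) : ℂ) + Complex.I * (μ : ℂ) - ((t:ℝ):ℂ))
      = Complex.mk (-d) μ := by
    apply Complex.ext <;> simp
  rw [this, Complex.norm_def, Complex.normSq_mk]
  ring_nf

lemma CP1 {t d μ : ℝ} (ht : t ≠ 0) (h2 : 2 * Real.sqrt (μ^2 + d^2) ≤ |t|) :
    ‖Complex.log ((((t - d : ℝ) : ℂ) + Complex.I * (μ : ℂ)) / ((t:ℝ):ℂ))‖^2
      ≤ 4 * (μ^2 + d^2) * (t^2)⁻¹ := by
  set ee := Real.sqrt (μ^2 + d^2) with hee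
  have hee0 : 0 ≤ ee := Real.sqrt_nonneg _
  have htc : ((t:ℝ):ℂ) ≠ 0 := by exact_mod_cast Complex.ofReal_ne_zero.mpr ht
  set z := (((t - d : ℝ) : ℂ) + Complex.I * (μ : ℂ)) with hz
  have hq : z / ((t:ℝ):ℂ) = 1 + (z - ((t:ℝ):ℂ)) / ((t:ℝ):ℂ) := by
    field_simp
    ring
  have hw : ‖(z - ((t:ℝ):ℂ)) / ((t:ℝ):ℂ)‖ = ee / |t| := by
    rw [norm_div, absnum, Complex.norm_real, Real.norm_eq_abs]
  have ht0 : 0 < |t| := abs_pos.mpr ht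
  have hw2 : ‖(z - ((t:ℝ):ℂ)) / ((t:ℝ):ℂ)‖ ≤ 1/2 := by
    rw [hw, div_le_iff₀ ht0]; linarith
  have hlog := Complex.norm_log_one_add_half_le_self hw2
  rw [← hq] at hlog
  have hb : ‖Complex.log (z / ((t:ℝ):ℂ))‖ ≤ 3/2 * (ee / |t|) := by rw [← hw]; exact hlog
  have h3 : (3/2 * (ee / |t|))^2 ≤ 4 * (μ^2 + d^2) * (t^2)⁻¹ := by
    have e2 : ee^2 = μ^2 + d^2 := Real.sq_sqrt (by positivity)
    have e3 : |t|^2 = t^2 := sq_abs t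
    have e4 : (3/2*(ee/|t|))^2 = 9/4 * ((μ^2+d^2) * (t^2)⁻¹) := by
      rw [mul_pow, div_pow ee, e2, e3]; ring
    rw [e4]
    have h5 : (0:ℝ) ≤ (μ^2+d^2) * (t^2)⁻¹ := by positivity
    nlinarith
  calc ‖Complex.log (z / ((t:ℝ):ℂ))‖^2 ≤ (3/2 * (ee / |t|))^2 := by
        apply sq_le_sq' _ hb
        nlinarith [norm_nonneg (Complex.log (z / ((t:ℝ):ℂ)))]
    _ ≤ _ := h3

lemma CP2 {t d μ : ℝ} (hμ : μ ≠ 0) (htd : t ≠ d)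
    (h32 : ‖(((t - d : ℝ) : ℂ) + Complex.I * (μ : ℂ))‖ ≤ 3/2) :
    ‖Complex.log ((((t - d : ℝ) : ℂ) + Complex.I * (μ : ℂ)) / ((t:ℝ):ℂ))‖^2
      ≤ Real.pi^2 + 1/2 + 2*(Real.log |t - d|)^2 + 2*(Real.log |t|)^2 := by
  rcases eq_or_ne t 0 with rfl | ht
  · have e0 : ((((0:ℝ) - d : ℝ) : ℂ) + Complex.I * (μ : ℂ)) / (((0:ℝ)):ℂ) = 0 := by
      norm_num
    rw [e0, Complex.log_zero, norm_zero]
    have e1 : ((0:ℝ))^2 = 0 := by norm_num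
    rw [e1]
    positivity
  set z := (((t - d : ℝ) : ℂ) + Complex.I * (μ : ℂ)) with hz
  have hzim : z.im = μ := by simp [hz]
  have hzre : z.re = t - d := by simp [hz]
  have hz0 : z ≠ 0 := fun h => hμ (by rw [← hzim, h]; simp)
  have habs0 : 0 < ‖z‖ := norm_pos_iff.mpr hz0
  have ht0 : 0 < |t| := abs_pos.mpr ht
  have htd0 : 0 < |t - d| := abs_pos.mpr (sub_ne_zero.mpr htd)
  have habsq : ‖(z / ((t:ℝ):ℂ))‖ = ‖z‖ / |t| := by
    rw [norm_div, Complex.norm_real, Real.norm_eq_abs]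
  rw [normlogsq, habsq, Real.log_div (ne_of_gt habs0) (ne_of_gt ht0)]
  have hre : |t - d| ≤ ‖z‖ := by
    rw [← hzre]; exact Complex.abs_re_le_norm z
  have h14 : (Real.log ‖z‖)^2 ≤ 1/4 + (Real.log |t - d|)^2 :=
    logsq_mono htd0 hre h32
  have harg : (Complex.arg (z / ((t:ℝ):ℂ)))^2 ≤ Real.pi^2 :=
    sq_le_sq' (by linarith [Complex.neg_pi_lt_arg (z / ((t:ℝ):ℂ))]) (Complex.arg_le_pi _)
  nlinarith [sq_nonneg (Real.log ‖z‖ + Real.log |t|),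
    sq_nonneg (Real.log ‖z‖ - Real.log |t|)]

lemma invmul {m : ℝ} (hm : 0 < m) (X : ℝ) :
    (ENNReal.ofReal m)⁻¹ * ENNReal.ofReal X = ENNReal.ofReal (X/m) := by
  rw [ENNReal.ofReal_div_of_pos hm, div_eq_mul_inv, mul_comm]

set_option maxHeartbeats 2000000 in
/-- for `U ∈ C¹([-1,1])` with `U' ≥ m > 0` and
`ν₀ ∈ [U(-1),U(1)]`, there is `C > 0` such that for all `λ = μ + iν` with
`0 < |λ - iν₀| ≤ 1/2` and `μ ≠ 0`,
`‖log((U+iλ)/(U-ν₀))‖_{L²(-1,1)} ≤ C |λ-iν₀|^{1/2} log(|λ-iν₀|⁻¹)`,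
where `(U+iλ)(x) = U(x) - ν + iμ`. -/
theorem stmt9 (U U' : ℝ → ℝ) (m : ℝ) (hm : 0 < m)
    (hU : ∀ x ∈ Set.Icc (-1:ℝ) 1, HasDerivWithinAt U (U' x) (Set.Icc (-1:ℝ) 1) x)
    (hU'c : ContinuousOn U' (Set.Icc (-1:ℝ) 1))
    (hU'm : ∀ x ∈ Set.Icc (-1:ℝ) 1, m ≤ U' x)
    (ν₀ : ℝ) (hν₀ : ν₀ ∈ Set.Icc (U (-1)) (U 1)) :
    ∃ C > 0, ∀ μ ν : ℝ, μ ≠ 0 →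
      0 < ‖(μ + ν * Complex.I) - ν₀ * Complex.I‖ →
      ‖(μ + ν * Complex.I) - ν₀ * Complex.I‖ ≤ 1 / 2 →
      ∫⁻ x in Set.Ioo (-1:ℝ) 1,
          ENNReal.ofReal
            (‖Complex.log ((((U x - ν : ℝ) : ℂ) + Complex.I * (μ : ℂ)) /
                (((U x - ν₀ : ℝ) : ℂ)))‖ ^ 2)
        ≤ ENNReal.ofReal
            ((C * Real.sqrt (‖(μ + ν * Complex.I) - ν₀ * Complex.I‖) *
              Real.log ((‖(μ + ν * Complex.I) - ν₀ * Complex.I‖)⁻¹)) ^ 2) := by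
  classical
  have hUcont : ContinuousOn U (Set.Icc (-1:ℝ) 1) :=
    fun x hx => (hU x hx).continuousWithinAt
  have hmono : ∀ x ∈ Set.Icc (-1:ℝ) 1, ∀ y ∈ Set.Icc (-1:ℝ) 1, x ≤ y →
      m * (y - x) ≤ U y - U x := by
    refine Convex.mul_sub_le_image_sub_of_le_deriv (convex_Icc _ _) hUcont ?_ ?_
    · intro z hz
      rw [interior_Icc] at hz
      exact ((hU z (Ioo_subset_Icc_self hz)).hasDerivAt
        (Icc_mem_nhds hz.1 hz.2)).differentiableAt.differentiableWithinAt
    · intro z hz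
      rw [interior_Icc] at hz
      rw [((hU z (Ioo_subset_Icc_self hz)).hasDerivAt (Icc_mem_nhds hz.1 hz.2)).deriv]
      exact hU'm z (Ioo_subset_Icc_self hz)
  have hsm : StrictMonoOn U (Set.Icc (-1:ℝ) 1) := by
    intro x hx y hy hxy
    have := hmono x hx y hy hxy.le
    nlinarith
  have hinj : InjOn U (Set.Icc (-1:ℝ) 1) := hsm.injOn
  have hUrange : ∀ x ∈ Set.Icc (-1:ℝ) 1, U (-1) ≤ U x ∧ U x ≤ U 1 := by
    intro x hx
    have h1 := hmono (-1) (by norm_num) x hx hx.1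
    have h2 := hmono x hx 1 (by norm_num) hx.2
    constructor <;> nlinarith [hx.1, hx.2]
  refine ⟨Real.sqrt (7000/m), Real.sqrt_pos.mpr (by positivity), ?_⟩
  intro μ ν hμ hpos hhalf
  set d : ℝ := ν - ν₀ with hd
  have heeval : ‖(μ + ν * Complex.I) - ν₀ * Complex.I‖
      = Real.sqrt (μ^2 + d^2) := by
    have h1 : (μ + ν * Complex.I) - ν₀ * Complex.I = Complex.mk μ d := by
      apply Complex.ext <;> simp [hd]
    rw [h1, Complex.norm_def, Complex.normSq_mk]
    ring_nf
  set ee : ℝ := Real.sqrt (μ^2 + d^2) with heedef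
  rw [heeval] at hpos hhalf ⊢
  have hee0 : 0 < ee := hpos
  have heesq : ee^2 = μ^2 + d^2 := Real.sq_sqrt (by positivity)
  have hdlee : |d| ≤ ee := by
    rw [heedef, abs_le]
    constructor <;> nlinarith [Real.sq_sqrt (show (0:ℝ) ≤ μ^2+d^2 by positivity),
      Real.sqrt_nonneg (μ^2+d^2)]
  -- the sets
  set A : Set ℝ := Ioo (-1:ℝ) 1 ∩ (fun x => |U x - ν₀|) ⁻¹' Ioi (2*ee) with hA
  have hcontabs : ContinuousOn (fun x => |U x - ν₀|) (Ioo (-1:ℝ) 1) :=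
    ((hUcont.mono Ioo_subset_Icc_self).sub continuousOn_const).abs
  have hAopen : IsOpen A := hcontabs.isOpen_inter_preimage isOpen_Ioo isOpen_Ioi
  have hAm : MeasurableSet A := hAopen.measurableSet
  set B : Set ℝ := Ioo (-1:ℝ) 1 \ A with hB
  have hBm : MeasurableSet B := measurableSet_Ioo.diff hAm
  have hAsubI : A ⊆ Ioo (-1:ℝ) 1 := inter_subset_left
  have hAsub : A ⊆ Set.Icc (-1:ℝ) 1 := hAsubI.trans Ioo_subset_Icc_self
  have hBsubI : B ⊆ Ioo (-1:ℝ) 1 := diff_subset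
  have hBsub : B ⊆ Set.Icc (-1:ℝ) 1 := hBsubI.trans Ioo_subset_Icc_self
  have hunion : Ioo (-1:ℝ) 1 = A ∪ B := by
    rw [hB, union_diff_cancel' (le_refl A) hAsubI]
  have hdisj : Disjoint A B := disjoint_sdiff_right
  -- properties of A and B
  have hAprop : ∀ x ∈ A, 2*ee < |U x - ν₀| := fun x hx => hx.2
  have hBprop : ∀ x ∈ B, |U x - ν₀| ≤ 2*ee := by
    intro x hx
    by_contra hc
    exact hx.2 ⟨hx.1, by push_neg at hc; exact hc⟩
  have hR : (1:ℝ) ≤ U 1 - U (-1) + 1 := by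
    have := hmono (-1) (by norm_num) 1 (by norm_num) (by norm_num)
    nlinarith
  set R : ℝ := U 1 - U (-1) + 1 with hRdef
  have habsR : ∀ x ∈ Set.Icc (-1:ℝ) 1, |U x - ν₀| ≤ R := by
    intro x hx
    obtain ⟨h1, h2⟩ := hUrange x hx
    rw [abs_le]
    constructor <;> [nlinarith [hν₀.2]; nlinarith [hν₀.1]]
  have hImA : U '' A ⊆ Icc (ν₀ - R) (ν₀ - 2*ee) ∪ Icc (ν₀ + 2*ee) (ν₀ + R) := by
    rintro s ⟨x, hx, rfl⟩
    have h1 := hAprop x hx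
    have h2 := habsR x (hAsub hx)
    rcases abs_cases (U x - ν₀) with ⟨he, _⟩ | ⟨he, _⟩
    · right; rw [he] at h1 h2; constructor <;> [linarith; linarith]
    · left; rw [he] at h1 h2; constructor <;> [linarith; linarith]
  have hImB : U '' B ⊆ Icc (ν₀ - 2*ee) (ν₀ + 2*ee) := by
    rintro s ⟨x, hx, rfl⟩
    have h1 := hBprop x hx
    rw [abs_le] at h1
    constructor <;> [linarith [h1.1]; linarith [h1.2]]
  set F : ℝ → ℝ≥0∞ := fun x => ENNReal.ofReal
    (‖Complex.log ((((U x - ν : ℝ) : ℂ) + Complex.I * (μ : ℂ)) /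
        (((U x - ν₀ : ℝ) : ℂ)))‖ ^ 2) with hF
  have hptA : ∀ x ∈ A, F x ≤ ENNReal.ofReal (4*ee^2) * ENNReal.ofReal (((U x - ν₀)^2)⁻¹) := by
    intro x hx
    have ht : U x - ν₀ ≠ 0 := by
      intro h
      have := hAprop x hx
      rw [h, abs_zero] at this
      nlinarith
    have h2 : 2 * Real.sqrt (μ^2 + d^2) ≤ |U x - ν₀| := (hAprop x hx).le
    have hcp := CP1 (t := U x - ν₀) (d := d) (μ := μ) ht h2
    simp only [hF]
    have e1 : (U x - ν : ℝ) = ((U x - ν₀) - d) := by rw [hd]; ring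
    rw [e1, ← ENNReal.ofReal_mul (by positivity)]
    refine ENNReal.ofReal_le_ofReal (hcp.trans (le_of_eq ?_))
    rw [heesq]
  have hAbound : ∫⁻ x in A, F x ≤ ENNReal.ofReal ((4*ee)/m) := by
    have h2eR : 2*ee ≤ R := by linarith
    have h2e0 : 0 < 2*ee := by linarith
    calc ∫⁻ x in A, F x
        ≤ ∫⁻ x in A, (fun s => ENNReal.ofReal (4*ee^2)
            * ENNReal.ofReal (((s - ν₀)^2)⁻¹)) (U x) :=
          setLIntegral_mono' hAm hptA
      _ ≤ (ENNReal.ofReal m)⁻¹ * ∫⁻ s in U '' A, ENNReal.ofReal (4*ee^2)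
            * ENNReal.ofReal (((s - ν₀)^2)⁻¹) :=
          lint_cov_le hm hAm (fun x hx => (hU x (hAsub hx)).mono hAsub)
            (hinj.mono hAsub) (fun x hx => hU'm x (hAsub hx)) _
      _ ≤ (ENNReal.ofReal m)⁻¹ * ∫⁻ s in Icc (ν₀ - R) (ν₀ - 2*ee)
            ∪ Icc (ν₀ + 2*ee) (ν₀ + R), ENNReal.ofReal (4*ee^2)
            * ENNReal.ofReal (((s - ν₀)^2)⁻¹) := by
          gcongr
      _ ≤ (ENNReal.ofReal m)⁻¹ * ((∫⁻ s in Icc (ν₀ - R) (ν₀ - 2*ee),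
            ENNReal.ofReal (4*ee^2) * ENNReal.ofReal (((s - ν₀)^2)⁻¹))
            + ∫⁻ s in Icc (ν₀ + 2*ee) (ν₀ + R),
            ENNReal.ofReal (4*ee^2) * ENNReal.ofReal (((s - ν₀)^2)⁻¹)) := by
          gcongr
          exact lintegral_union_le _ _ _
      _ ≤ (ENNReal.ofReal m)⁻¹ * ((ENNReal.ofReal (4*ee^2) * ENNReal.ofReal ((2*ee)⁻¹))
            + ENNReal.ofReal (4*ee^2) * ENNReal.ofReal ((2*ee)⁻¹)) := by
          gcongr (ENNReal.ofReal m)⁻¹ * (?_ + ?_)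
          · rw [lintegral_const_mul' _ _ ENNReal.ofReal_ne_top]
            gcongr
            exact K2l h2e0 h2eR
          · rw [lintegral_const_mul' _ _ ENNReal.ofReal_ne_top]
            gcongr
            exact K2r h2e0 h2eR
      _ = ENNReal.ofReal ((4*ee)/m) := by
          rw [← ENNReal.ofReal_mul (by positivity),
            ← ENNReal.ofReal_add (by positivity) (by positivity), invmul hm]
          congr 1
          field_simp
          ring
  -- B part
  set gB : ℝ → ℝ≥0∞ := fun s => ENNReal.ofReal (Real.pi^2 + 1/2)
      + (ENNReal.ofReal (2*(Real.log |s - ν|)^2)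
        + ENNReal.ofReal (2*(Real.log |s - ν₀|)^2)) with hgB
  have hNsub : Set.Subsingleton {x | x ∈ Set.Icc (-1:ℝ) 1 ∧ U x = ν} := by
    rintro a ⟨ha1, ha2⟩ b ⟨hb1, hb2⟩
    exact hinj ha1 hb1 (ha2.trans hb2.symm)
  have hN0 : volume {x | x ∈ Set.Icc (-1:ℝ) 1 ∧ U x = ν} = 0 :=
    Set.Subsingleton.measure_zero hNsub _
  have hptB : ∀ᵐ x ∂(volume.restrict B), F x ≤ gB (U x) := by
    rw [ae_restrict_iff' hBm]
    filter_upwards [compl_mem_ae_iff.mpr hN0] with x hxN hxB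
    have hxI : x ∈ Set.Icc (-1:ℝ) 1 := hBsub hxB
    have hne : U x ≠ ν := fun h => hxN ⟨hxI, h⟩
    have htd : U x - ν₀ ≠ d := by
      rw [hd]; intro h; apply hne; linarith [sub_eq_sub_iff_sub_eq_sub.mp h]
    have hb1 := hBprop x hxB
    have h32 : ‖((((U x - ν₀) - d : ℝ) : ℂ) + Complex.I * (μ : ℂ))‖ ≤ 3/2 := by
      have e2 : ((((U x - ν₀) - d : ℝ) : ℂ) + Complex.I * (μ : ℂ))
          = ((((U x - ν₀) - d : ℝ) : ℂ) + Complex.I * (μ : ℂ)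
              - (((U x - ν₀ : ℝ)):ℂ)) + (((U x - ν₀ : ℝ)):ℂ) := by ring
      rw [e2]
      refine (norm_add_le _ _).trans ?_
      rw [absnum, Complex.norm_real, Real.norm_eq_abs, ← heedef]
      linarith
    have hcp := CP2 (t := U x - ν₀) (d := d) (μ := μ) hμ htd h32
    simp only [hF, hgB]
    have e1 : (U x - ν : ℝ) = ((U x - ν₀) - d) := by rw [hd]; ring
    rw [e1, ← ENNReal.ofReal_add (by positivity) (by positivity),
      ← ENNReal.ofReal_add (by positivity) (by positivity)]
    refine ENNReal.ofReal_le_ofReal (hcp.trans (le_of_eq ?_))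
    have e3 : U x - ν₀ - d = U x - ν := by rw [hd]; ring
    rw [e3]
    ring
  have hmeas2 : Measurable (fun s : ℝ => ENNReal.ofReal (2*(Real.log |s - ν|)^2)) :=
    ENNReal.measurable_ofReal.comp
      (((Real.measurable_log.comp ((measurable_id.sub_const ν).abs)).pow_const 2).const_mul 2)
  have hp2 : ∫⁻ s in Icc (ν₀-2*ee) (ν₀+2*ee), ENNReal.ofReal (2*(Real.log |s - ν|)^2)
      ≤ ENNReal.ofReal (2*(4*(3*ee)*(Real.log (3*ee))^2 + 128*(3*ee))) := by
    have hda := abs_le.mp hdlee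
    have hsub : Icc (ν₀-2*ee) (ν₀+2*ee) ⊆ Icc (ν - 3*ee) (ν + 3*ee) := by
      apply Icc_subset_Icc <;> simp only [hd] at hda ⊢ <;> [linarith [hda.1]; linarith [hda.2]]
    refine (lintegral_mono_set hsub).trans ?_
    have he : ∀ s : ℝ, ENNReal.ofReal (2*(Real.log |s - ν|)^2)
        = 2 * ENNReal.ofReal ((Real.log |s - ν|)^2) := by
      intro s
      rw [ENNReal.ofReal_mul (by norm_num)]
      norm_num
    simp_rw [he]
    rw [lintegral_const_mul' _ _ (by norm_num)]
    calc 2 * ∫⁻ s in Icc (ν-3*ee) (ν+3*ee), ENNReal.ofReal ((Real.log |s-ν|)^2)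
        ≤ 2 * ENNReal.ofReal (4*(3*ee)*(Real.log (3*ee))^2 + 128*(3*ee)) := by
          gcongr
          exact K1 (by linarith)
      _ = _ := by
          rw [ENNReal.ofReal_mul (by norm_num)]
          norm_num
  have hp3 : ∫⁻ s in Icc (ν₀-2*ee) (ν₀+2*ee), ENNReal.ofReal (2*(Real.log |s - ν₀|)^2)
      ≤ ENNReal.ofReal (2*(4*(2*ee)*(Real.log (2*ee))^2 + 128*(2*ee))) := by
    have he : ∀ s : ℝ, ENNReal.ofReal (2*(Real.log |s - ν₀|)^2)
        = 2 * ENNReal.ofReal ((Real.log |s - ν₀|)^2) := by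
      intro s
      rw [ENNReal.ofReal_mul (by norm_num)]
      norm_num
    simp_rw [he]
    rw [lintegral_const_mul' _ _ (by norm_num)]
    calc 2 * ∫⁻ s in Icc (ν₀-2*ee) (ν₀+2*ee), ENNReal.ofReal ((Real.log |s-ν₀|)^2)
        ≤ 2 * ENNReal.ofReal (4*(2*ee)*(Real.log (2*ee))^2 + 128*(2*ee)) := by
          gcongr
          exact K1 (by linarith)
      _ = _ := by
          rw [ENNReal.ofReal_mul (by norm_num)]
          norm_num
  have hconst : ∫⁻ _s in Icc (ν₀-2*ee) (ν₀+2*ee),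
      (ENNReal.ofReal (Real.pi^2 + 1/2) : ℝ≥0∞) ≤ ENNReal.ofReal ((Real.pi^2+1/2)*(4*ee)) := by
    rw [setLIntegral_const, Real.volume_Icc, ← ENNReal.ofReal_mul (by positivity)]
    apply ENNReal.ofReal_le_ofReal
    have : ν₀ + 2*ee - (ν₀ - 2*ee) = 4*ee := by ring
    rw [this]
  have hBbound : ∫⁻ x in B, F x ≤ ENNReal.ofReal
      (((Real.pi^2+1/2)*(4*ee) + (2*(4*(3*ee)*(Real.log (3*ee))^2 + 128*(3*ee))
        + 2*(4*(2*ee)*(Real.log (2*ee))^2 + 128*(2*ee))))/m) := by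
    calc ∫⁻ x in B, F x ≤ ∫⁻ x in B, gB (U x) := lintegral_mono_ae hptB
      _ ≤ (ENNReal.ofReal m)⁻¹ * ∫⁻ s in U '' B, gB s :=
          lint_cov_le hm hBm (fun x hx => (hU x (hBsub hx)).mono hBsub)
            (hinj.mono hBsub) (fun x hx => hU'm x (hBsub hx)) _
      _ ≤ (ENNReal.ofReal m)⁻¹ * ∫⁻ s in Icc (ν₀-2*ee) (ν₀+2*ee), gB s := by
          gcongr
      _ = (ENNReal.ofReal m)⁻¹ * ((∫⁻ _s in Icc (ν₀-2*ee) (ν₀+2*ee),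
            (ENNReal.ofReal (Real.pi^2 + 1/2) : ℝ≥0∞))
            + ((∫⁻ s in Icc (ν₀-2*ee) (ν₀+2*ee), ENNReal.ofReal (2*(Real.log |s - ν|)^2))
            + ∫⁻ s in Icc (ν₀-2*ee) (ν₀+2*ee), ENNReal.ofReal (2*(Real.log |s - ν₀|)^2))) := by
          simp only [hgB]
          rw [lintegral_add_left measurable_const, lintegral_add_left hmeas2]
      _ ≤ (ENNReal.ofReal m)⁻¹ * (ENNReal.ofReal ((Real.pi^2+1/2)*(4*ee))
            + (ENNReal.ofReal (2*(4*(3*ee)*(Real.log (3*ee))^2 + 128*(3*ee)))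
            + ENNReal.ofReal (2*(4*(2*ee)*(Real.log (2*ee))^2 + 128*(2*ee))))) := by
          exact mul_le_mul_right (add_le_add hconst (add_le_add hp2 hp3)) _
      _ = _ := by
          rw [← ENNReal.ofReal_add (by positivity) (by positivity),
            ← ENNReal.ofReal_add (by positivity) (by positivity), invmul hm]
  -- final assembly
  rw [hunion, lintegral_union hBm hdisj]
  refine le_trans (add_le_add hAbound hBbound) ?_
  rw [← ENNReal.ofReal_add (by positivity) (by positivity)]
  refine ENNReal.ofReal_le_ofReal ?_
  set L := Real.log (ee⁻¹) with hLdef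
  have hLeq : L = - Real.log ee := by rw [hLdef, Real.log_inv]
  have h2i : (2:ℝ) ≤ ee⁻¹ := by
    rw [show (2:ℝ) = ((1:ℝ)/2)⁻¹ by norm_num]
    exact inv_anti₀ hee0 hhalf
  have hlog2 : (0.6931:ℝ) ≤ Real.log 2 := by
    have := Real.log_two_gt_d9
    linarith
  have hL : Real.log 2 ≤ L := by
    rw [hLdef]
    exact Real.log_le_log (by norm_num) h2i
  have hL0 : (0.6931:ℝ) ≤ L := by linarith
  have hLsq : (0.48:ℝ) ≤ L^2 := by nlinarith
  have h2ee : Real.log (2*ee) = Real.log 2 - L := by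
    rw [Real.log_mul (by norm_num) (ne_of_gt hee0), hLeq]; ring
  have h3ee : Real.log (3*ee) = Real.log 3 - L := by
    rw [Real.log_mul (by norm_num) (ne_of_gt hee0), hLeq]; ring
  have hlog3a : (0:ℝ) ≤ Real.log 3 := Real.log_nonneg (by norm_num)
  have hlog3b : Real.log 3 ≤ 2 := by
    nlinarith [Real.log_le_sub_one_of_pos (show (0:ℝ) < 3 by norm_num)]
  have hsq2 : (Real.log (2*ee))^2 ≤ L^2 := by
    rw [h2ee]
    have h1 : (0:ℝ) ≤ Real.log 2 := by linarith
    nlinarith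
  have hsq3 : (Real.log (3*ee))^2 ≤ 4*L^2 := by
    rw [h3ee]
    nlinarith
  have hpi : Real.pi^2 ≤ 16 := by
    nlinarith [Real.pi_le_four, Real.pi_pos]
  rw [mul_pow, mul_pow, Real.sq_sqrt (le_of_lt (show (0:ℝ) < 7000/m by positivity)),
    Real.sq_sqrt hee0.le]
  have hmain : 4*ee + ((Real.pi^2+1/2)*(4*ee) + (2*(4*(3*ee)*(Real.log (3*ee))^2 + 128*(3*ee))
      + 2*(4*(2*ee)*(Real.log (2*ee))^2 + 128*(2*ee)))) ≤ 7000 * (ee * L^2) := by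
    nlinarith [mul_le_mul_of_nonneg_left hsq2 hee0.le,
      mul_le_mul_of_nonneg_left hsq3 hee0.le,
      mul_le_mul_of_nonneg_left hLsq hee0.le]
  calc 4*ee/m + ((Real.pi^2+1/2)*(4*ee) + (2*(4*(3*ee)*(Real.log (3*ee))^2 + 128*(3*ee))
        + 2*(4*(2*ee)*(Real.log (2*ee))^2 + 128*(2*ee))))/m
      = (4*ee + ((Real.pi^2+1/2)*(4*ee) + (2*(4*(3*ee)*(Real.log (3*ee))^2 + 128*(3*ee))
        + 2*(4*(2*ee)*(Real.log (2*ee))^2 + 128*(2*ee)))))/m := by ring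
    _ ≤ (7000 * (ee * L^2))/m := by gcongr
    _ = 7000/m * ee * L^2 := by ring
end

section
/- Let $U \in C^2([-1,1])$ be real-valued, let $\alpha \geq 0$, $\beta > 0$, $\lambda = \mu + i\nu \in \mathbb{C}$ with $\nu \geq 2(\|U\|_\infty + \|U''\|_\infty + 1)$ and $|\mu| \leq \nu$. If $\phi \in H^4(-1,1)$ with $\phi(\pm 1) = \phi'(\pm 1) = 0$ satisfies $\big(-\tfrac{d^2}{dx^2} + i\beta(U + i\lambda)\big)(-\phi'' + \alpha^2\phi) + i\beta U'' \phi = f$, then $\|\phi'\|_{L^2}^2 + \alpha^2\|\phi\|_{L^2}^2 \leq \frac{2}{\beta\nu}\|\phi\|_{L^2}\|f\|_{L^2}$. -/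
open MeasureTheory Set intervalIntegral Complex

noncomputable section StmtTenAux

lemma star_mul_self_eq (z : ℂ) : star z * z = ((‖z‖^2:ℝ):ℂ) := by
  rw [Complex.star_def, ← Complex.normSq_eq_conj_mul_self, Complex.normSq_eq_norm_sq]


lemma myFTC {u u' : ℝ → ℂ}
    (hc : ContinuousOn u (Icc (-1:ℝ) 1))
    (hd : ∀ x ∈ Ioo (-1:ℝ) 1, HasDerivAt u (u' x) x)
    (hi : IntervalIntegrable u' volume (-1) 1) :
    ∫ x in (-1:ℝ)..1, u' x = u 1 - u (-1) :=
  integral_eq_sub_of_hasDeriv_right_of_le (by norm_num) hc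
    (fun x hx => (hd x hx).hasDerivWithinAt) hi

lemma interiorDeriv {u : ℝ → ℂ} {u' : ℝ → ℂ}
    (h : ∀ x ∈ Icc (-1:ℝ) 1, HasDerivWithinAt u (u' x) (Icc (-1:ℝ) 1) x)
    {x : ℝ} (hx : x ∈ Ioo (-1:ℝ) 1) : HasDerivAt u (u' x) x :=
  (h x (Ioo_subset_Icc_self hx)).hasDerivAt (Icc_mem_nhds hx.1 hx.2)

lemma interiorDerivR {u : ℝ → ℝ} {u' : ℝ → ℝ}
    (h : ∀ x ∈ Icc (-1:ℝ) 1, HasDerivWithinAt u (u' x) (Icc (-1:ℝ) 1) x)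
    {x : ℝ} (hx : x ∈ Ioo (-1:ℝ) 1) : HasDerivAt u (u' x) x :=
  (h x (Ioo_subset_Icc_self hx)).hasDerivAt (Icc_mem_nhds hx.1 hx.2)

lemma cInt {g : ℝ → ℂ} (h : ContinuousOn g (Icc (-1:ℝ) 1)) :
    IntervalIntegrable g volume (-1) 1 :=
  (h.mono (by rw [uIcc_of_le (by norm_num : (-1:ℝ) ≤ 1)])).intervalIntegrable

lemma cIntR {g : ℝ → ℝ} (h : ContinuousOn g (Icc (-1:ℝ) 1)) :
    IntervalIntegrable g volume (-1) 1 :=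
  (h.mono (by rw [uIcc_of_le (by norm_num : (-1:ℝ) ≤ 1)])).intervalIntegrable

lemma swap_primitive {p q : ℝ → ℂ}
    (hp : ContinuousOn p (Icc (-1:ℝ) 1))
    (hq : IntegrableOn q (Ioc (-1:ℝ) 1) volume) :
    ∫ x in Ioc (-1:ℝ) 1, (∫ t in Ioc (-1:ℝ) x, p t) * q x
      = ∫ t in Ioc (-1:ℝ) 1, p t * ∫ x in Ioc t 1, q x := by
  set μ := volume.restrict (Ioc (-1:ℝ) 1) with hμ
  have hpm : AEStronglyMeasurable p μ :=
    (hp.mono Ioc_subset_Icc_self).aestronglyMeasurable measurableSet_Ioc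
  have hpint : Integrable p μ := by
    have : IntegrableOn p (Icc (-1:ℝ) 1) volume :=
      hp.integrableOn_compact isCompact_Icc
    exact this.mono_set Ioc_subset_Icc_self
  have hqm : AEStronglyMeasurable q μ := hq.aestronglyMeasurable
  have hSet : MeasurableSet {z : ℝ × ℝ | z.2 ≤ z.1} :=
    (isClosed_le continuous_snd continuous_fst).measurableSet
  set G : ℝ × ℝ → ℂ := fun z => ({z : ℝ × ℝ | z.2 ≤ z.1}).indicator
      (fun z => p z.2 * q z.1) z with hG
  have hGm : AEStronglyMeasurable G (μ.prod μ) :=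
    (AEStronglyMeasurable.indicator (f := fun z : ℝ × ℝ => p z.2 * q z.1)
      (AEStronglyMeasurable.mul hpm.comp_snd hqm.comp_fst) hSet)
  have hGint : Integrable G (μ.prod μ) := by
    have hH : Integrable (fun z : ℝ × ℝ => q z.1 * p z.2) (μ.prod μ) :=
      hq.mul_prod hpint
    refine Integrable.mono hH hGm (Filter.Eventually.of_forall fun z => ?_)
    calc ‖G z‖ ≤ ‖p z.2 * q z.1‖ := norm_indicator_le_norm_self _ z
      _ = ‖q z.1 * p z.2‖ := by rw [mul_comm]
  have hswap := MeasureTheory.integral_integral_swap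
    (f := fun x t => G (x, t)) (μ := μ) (ν := μ) (by exact hGint)
  have hL : ∫ x, (∫ t, G (x, t) ∂μ) ∂μ
      = ∫ x in Ioc (-1:ℝ) 1, (∫ t in Ioc (-1:ℝ) x, p t) * q x := by
    refine setIntegral_congr_fun measurableSet_Ioc (fun x hx => ?_)
    have : ∀ t, G (x, t) = (Iic x).indicator (fun t => p t * q x) t := by
      intro t
      simp only [hG, indicator, mem_setOf_eq, mem_Iic]
    rw [show (fun t => G (x,t)) = (Iic x).indicator (fun t => p t * q x) from funext this]
    rw [hμ, MeasureTheory.integral_indicator measurableSet_Iic,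
      Measure.restrict_restrict measurableSet_Iic]
    have hs : Iic x ∩ Ioc (-1:ℝ) 1 = Ioc (-1:ℝ) x := by
      ext t; simp only [mem_inter_iff, mem_Iic, mem_Ioc]
      constructor
      · rintro ⟨h1, h2, h3⟩; exact ⟨h2, h1⟩
      · rintro ⟨h1, h2⟩; exact ⟨h2, h1, h2.trans hx.2⟩
    rw [hs, MeasureTheory.integral_mul_const]
  have hR : ∫ t, (∫ x, G (x, t) ∂μ) ∂μ
      = ∫ t in Ioc (-1:ℝ) 1, p t * ∫ x in Ioc t 1, q x := by
    refine setIntegral_congr_fun measurableSet_Ioc (fun t ht => ?_)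
    have : ∀ x, G (x, t) = (Ici t).indicator (fun x => p t * q x) x := by
      intro x
      simp only [hG, indicator, mem_setOf_eq, mem_Ici]
    rw [show (fun x => G (x,t)) = (Ici t).indicator (fun x => p t * q x) from funext this]
    rw [hμ, MeasureTheory.integral_indicator measurableSet_Ici,
      Measure.restrict_restrict measurableSet_Ici]
    have hs : Ici t ∩ Ioc (-1:ℝ) 1 = Icc t 1 := by
      ext x; simp only [mem_inter_iff, mem_Ici, mem_Ioc, mem_Icc]
      constructor
      · rintro ⟨h1, h2, h3⟩; exact ⟨h1, h3⟩
      · rintro ⟨h1, h2⟩; exact ⟨h1, ht.1.trans_le h1, h2⟩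
    rw [hs, MeasureTheory.integral_const_mul, integral_Icc_eq_integral_Ioc]
  rw [← hL, hswap, hR]

lemma cs2 {g h : ℝ → ℂ} {μ : Measure ℝ} (hg : MemLp g 2 μ) (hh : MemLp h 2 μ) :
    ∫ x, ‖g x‖ * ‖h x‖ ∂μ ≤ Real.sqrt (∫ x, ‖g x‖^2 ∂μ) * Real.sqrt (∫ x, ‖h x‖^2 ∂μ) := by
  have hconj : (2:ℝ).HolderConjugate 2 := ⟨by norm_num, by norm_num, by norm_num⟩
  have h2 : ENNReal.ofReal (2:ℝ) = 2 := by
    rw [ENNReal.ofReal_ofNat]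
  have := integral_mul_norm_le_Lp_mul_Lq (μ := μ) (f := g) (g := h) hconj
    (by rwa [h2]) (by rwa [h2])
  have e1 : ∫ x, ‖g x‖ ^ (2:ℝ) ∂μ = ∫ x, ‖g x‖^2 ∂μ := by
    congr 1; ext x; rw [← Real.rpow_natCast ‖g x‖ 2]; norm_num
  have e2 : ∫ x, ‖h x‖ ^ (2:ℝ) ∂μ = ∫ x, ‖h x‖^2 ∂μ := by
    congr 1; ext x; rw [← Real.rpow_natCast ‖h x‖ 2]; norm_num
  rw [e1, e2] at this
  calc ∫ x, ‖g x‖ * ‖h x‖ ∂μ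
      ≤ (∫ x, ‖g x‖^2 ∂μ) ^ (1/(2:ℝ)) * (∫ x, ‖h x‖^2 ∂μ) ^ (1/(2:ℝ)) := this
    _ = _ := by rw [← Real.sqrt_eq_rpow, ← Real.sqrt_eq_rpow]



lemma intervalIntegral_star (g : ℝ → ℂ) (a b : ℝ) (hg : IntervalIntegrable g volume a b) :
    ∫ t in a..b, star (g t) = star (∫ t in a..b, g t) := by
  have := (Complex.conjLIE.toLinearIsometry.toContinuousLinearMap).intervalIntegral_comp_comm hg
  simpa [Complex.star_def] using this
end StmtTenAux
set_option maxHeartbeats 2000000 in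
/-- resolvent estimate for the Orr–Sommerfeld operator in the
regime of large `Im λ`.  `U ∈ C²([-1,1])`, `α ≥ 0`, `β > 0`, `λ = μ + iν` with
`ν ≥ 2(‖U‖_∞ + ‖U''‖_∞ + 1)` and `|μ| ≤ ν`.  `φ ∈ H⁴(-1,1)` with
`φ(±1) = φ'(±1) = 0` (encoded via derivatives `d1, d2, d3` and `d4 = φ'''' ∈ L²`)
satisfies `(-d²/dx² + iβ(U+iλ))(-φ'' + α²φ) + iβU''φ = f` a.e.; then
`‖φ'‖² + α²‖φ‖² ≤ (2/(βν))‖φ‖_{L²}‖f‖_{L²}`. -/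
theorem stmt10 (U U1 U2 : ℝ → ℝ)
    (hU : ∀ x ∈ Set.Icc (-1:ℝ) 1, HasDerivWithinAt U (U1 x) (Set.Icc (-1:ℝ) 1) x)
    (hU1 : ∀ x ∈ Set.Icc (-1:ℝ) 1, HasDerivWithinAt U1 (U2 x) (Set.Icc (-1:ℝ) 1) x)
    (hU2c : ContinuousOn U2 (Set.Icc (-1:ℝ) 1))
    (MU MU2 : ℝ)
    (hMU : ∀ x ∈ Set.Icc (-1:ℝ) 1, |U x| ≤ MU)
    (hMU2 : ∀ x ∈ Set.Icc (-1:ℝ) 1, |U2 x| ≤ MU2)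
    (α β μ ν : ℝ) (hα : 0 ≤ α) (hβ : 0 < β)
    (hν : 2 * (MU + MU2 + 1) ≤ ν) (hμ : |μ| ≤ ν)
    (φ d1 d2 d3 d4 f : ℝ → ℂ)
    (hd1 : ∀ x ∈ Set.Icc (-1:ℝ) 1, HasDerivWithinAt φ (d1 x) (Set.Icc (-1:ℝ) 1) x)
    (hd2 : ∀ x ∈ Set.Icc (-1:ℝ) 1, HasDerivWithinAt d1 (d2 x) (Set.Icc (-1:ℝ) 1) x)
    (hd3 : ∀ x ∈ Set.Icc (-1:ℝ) 1, HasDerivWithinAt d2 (d3 x) (Set.Icc (-1:ℝ) 1) x)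
    (hd4FTC : ∀ x ∈ Set.Icc (-1:ℝ) 1, d3 x = d3 (-1) + ∫ t in (-1:ℝ)..x, d4 t)
    (hd4 : MeasureTheory.MemLp d4 2 (MeasureTheory.volume.restrict (Set.Ioo (-1:ℝ) 1)))
    (hd4i : IntervalIntegrable d4 MeasureTheory.volume (-1) 1)
    (hf : MeasureTheory.MemLp f 2 (MeasureTheory.volume.restrict (Set.Ioo (-1:ℝ) 1)))
    (hbφm : φ (-1) = 0) (hbφp : φ 1 = 0) (hbd1m : d1 (-1) = 0) (hbd1p : d1 1 = 0)
    (heq : ∀ᵐ x ∂(MeasureTheory.volume.restrict (Set.Ioo (-1:ℝ) 1)),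
      d4 x - (α : ℂ) ^ 2 * d2 x
        + Complex.I * (β : ℂ) * (((U x - ν : ℝ) : ℂ) + Complex.I * (μ : ℂ)) *
            (-(d2 x) + (α : ℂ) ^ 2 * φ x)
        + Complex.I * (β : ℂ) * ((U2 x : ℝ) : ℂ) * φ x = f x) :
    (∫ x in (-1:ℝ)..1, ‖d1 x‖ ^ 2) + α ^ 2 * ∫ x in (-1:ℝ)..1, ‖φ x‖ ^ 2
      ≤ (2 / (β * ν)) * Real.sqrt (∫ x in (-1:ℝ)..1, ‖φ x‖ ^ 2) *
          Real.sqrt (∫ x in (-1:ℝ)..1, ‖f x‖ ^ 2) := by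

  have hab : (-1:ℝ) ≤ 1 := by norm_num
  have hrest : volume.restrict (Ioo (-1:ℝ) 1) = volume.restrict (Ioc (-1:ℝ) 1) :=
    Measure.restrict_congr_set Ioo_ae_eq_Ioc
  rw [hrest] at hd4 hf heq
  haveI : IsFiniteMeasure (volume.restrict (Ioc (-1:ℝ) 1)) :=
    ⟨by rw [Measure.restrict_apply_univ]; exact measure_Ioc_lt_top⟩
  have hφc : ContinuousOn φ (Icc (-1:ℝ) 1) := fun x hx => (hd1 x hx).continuousWithinAt
  have hd1c : ContinuousOn d1 (Icc (-1:ℝ) 1) := fun x hx => (hd2 x hx).continuousWithinAt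
  have hd2c : ContinuousOn d2 (Icc (-1:ℝ) 1) := fun x hx => (hd3 x hx).continuousWithinAt
  have hUc : ContinuousOn U (Icc (-1:ℝ) 1) := fun x hx => (hU x hx).continuousWithinAt
  have hU1c : ContinuousOn U1 (Icc (-1:ℝ) 1) := fun x hx => (hU1 x hx).continuousWithinAt
  have hd3c : ContinuousOn d3 (Icc (-1:ℝ) 1) := by
    have h1 : ContinuousOn (fun x => d3 (-1) + ∫ t in (-1:ℝ)..x, d4 t) (Icc (-1:ℝ) 1) := by
      apply continuousOn_const.add
      have h2 := intervalIntegral.continuousOn_primitive_interval' (a := -1) hd4i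
        (by rw [uIcc_of_le hab]; exact left_mem_Icc.2 hab)
      rwa [uIcc_of_le hab] at h2
    exact ContinuousOn.congr h1 (fun x hx => hd4FTC x hx)
  have hsφc : ContinuousOn (fun x => star (φ x)) (Icc (-1:ℝ) 1) := hφc.star
  have hsd1c : ContinuousOn (fun x => star (d1 x)) (Icc (-1:ℝ) 1) := hd1c.star
  have hsd2c : ContinuousOn (fun x => star (d2 x)) (Icc (-1:ℝ) 1) := hd2c.star
  have hφFTC : ∀ x ∈ Icc (-1:ℝ) 1, ∫ t in (-1:ℝ)..x, d1 t = φ x := by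
    intro x hx
    have hint : IntervalIntegrable d1 volume (-1) x := by
      refine (cInt hd1c).mono_set ?_
      rw [uIcc_of_le hx.1, uIcc_of_le hab]
      exact Icc_subset_Icc le_rfl hx.2
    have h1 : ∫ t in (-1:ℝ)..x, d1 t = φ x - φ (-1) :=
      integral_eq_sub_of_hasDeriv_right_of_le hx.1 (hφc.mono (Icc_subset_Icc le_rfl hx.2))
        (fun t ht => (interiorDeriv hd1 ⟨ht.1, lt_of_lt_of_le ht.2 hx.2⟩).hasDerivWithinAt) hint
    rw [h1, hbφm, sub_zero]
  have hreal : ∀ (w : ℝ → ℝ) (g : ℝ → ℂ), (∫ x in (-1:ℝ)..1, ((w x :ℝ):ℂ) * (star (g x) * g x))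
      = ((∫ x in (-1:ℝ)..1, w x * ‖g x‖^2 : ℝ) : ℂ) := by
    intro w g
    rw [← intervalIntegral.integral_ofReal]
    apply intervalIntegral.integral_congr
    intro x _
    simp only [star_mul_self_eq]
    push_cast
    ring
  have hreal0 : ∀ g : ℝ → ℂ, (∫ x in (-1:ℝ)..1, star (g x) * g x)
      = ((∫ x in (-1:ℝ)..1, ‖g x‖^2 : ℝ):ℂ) := by
    intro g
    rw [← intervalIntegral.integral_ofReal]
    apply intervalIntegral.integral_congr
    intro x _
    simp only [star_mul_self_eq]
  -- basic coercion continuities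
  have hU1cc : ContinuousOn (fun x => ((U1 x:ℝ):ℂ)) (Icc (-1:ℝ) 1) :=
    Complex.continuous_ofReal.comp_continuousOn hU1c
  have hU2cc : ContinuousOn (fun x => ((U2 x:ℝ):ℂ)) (Icc (-1:ℝ) 1) :=
    Complex.continuous_ofReal.comp_continuousOn hU2c
  have hUνcc : ContinuousOn (fun x => ((U x - ν:ℝ):ℂ)) (Icc (-1:ℝ) 1) :=
    Complex.continuous_ofReal.comp_continuousOn (hUc.sub continuousOn_const)
  -- IBP3
  have hIBP3 : (∫ x in (-1:ℝ)..1, star (φ x) * d2 x)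
      = -((∫ x in (-1:ℝ)..1, ‖d1 x‖^2 : ℝ) : ℂ) := by
    have hder : ∀ x ∈ Ioo (-1:ℝ) 1, HasDerivAt (fun x => star (φ x) * d1 x)
        ((fun x => star (d1 x) * d1 x + star (φ x) * d2 x) x) x :=
      fun x hx => (interiorDeriv hd1 hx).star.mul (interiorDeriv hd2 hx)
    have h0 := myFTC (hsφc.fun_mul hd1c) hder (cInt ((hsd1c.fun_mul hd1c).fun_add (hsφc.fun_mul hd2c)))
    rw [hbd1p, hbd1m, mul_zero, mul_zero, sub_zero] at h0
    rw [intervalIntegral.integral_add (cInt (hsd1c.fun_mul hd1c)) (cInt (hsφc.fun_mul hd2c)),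
      hreal0 d1] at h0
    exact eq_neg_of_add_eq_zero_right h0
  -- IBP2
  have hIBP2 : (∫ x in (-1:ℝ)..1, star (d1 x) * d3 x)
      = -((∫ x in (-1:ℝ)..1, ‖d2 x‖^2 : ℝ) : ℂ) := by
    have hder : ∀ x ∈ Ioo (-1:ℝ) 1, HasDerivAt (fun x => star (d1 x) * d2 x)
        ((fun x => star (d2 x) * d2 x + star (d1 x) * d3 x) x) x :=
      fun x hx => (interiorDeriv hd2 hx).star.mul (interiorDeriv hd3 hx)
    have h0 := myFTC (hsd1c.fun_mul hd2c) hder (cInt ((hsd2c.fun_mul hd2c).fun_add (hsd1c.fun_mul hd3c)))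
    rw [hbd1p, hbd1m, star_zero, zero_mul, zero_mul, sub_zero] at h0
    rw [intervalIntegral.integral_add (cInt (hsd2c.fun_mul hd2c)) (cInt (hsd1c.fun_mul hd3c)),
      hreal0 d2] at h0
    exact eq_neg_of_add_eq_zero_right h0
  -- S1 via Fubini
  have hS1 : (∫ x in (-1:ℝ)..1, star (φ x) * d4 x)
      = ((∫ x in (-1:ℝ)..1, ‖d2 x‖^2 : ℝ) : ℂ) := by
    have hq : IntegrableOn d4 (Ioc (-1:ℝ) 1) volume := by
      have h := hd4i
      rwa [intervalIntegrable_iff_integrableOn_Ioc_of_le hab] at h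
    have hswap := swap_primitive (p := fun t => star (d1 t)) hsd1c hq
    have hL : ∫ x in Ioc (-1:ℝ) 1, (∫ t in Ioc (-1:ℝ) x, star (d1 t)) * d4 x
        = ∫ x in Ioc (-1:ℝ) 1, star (φ x) * d4 x := by
      refine setIntegral_congr_fun measurableSet_Ioc (fun x hx => ?_)
      have hx' : x ∈ Icc (-1:ℝ) 1 := Ioc_subset_Icc_self hx
      have hint : IntervalIntegrable d1 volume (-1) x := by
        refine (cInt hd1c).mono_set ?_
        rw [uIcc_of_le hx'.1, uIcc_of_le hab]
        exact Icc_subset_Icc le_rfl hx'.2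
      have h1 : ∫ t in Ioc (-1:ℝ) x, star (d1 t) = star (φ x) := by
        rw [← intervalIntegral.integral_of_le hx'.1,
          intervalIntegral_star d1 (-1) x hint, hφFTC x hx']
      rw [h1]
    have hR : ∫ t in Ioc (-1:ℝ) 1, star (d1 t) * ∫ x in Ioc t 1, d4 x
        = ∫ t in Ioc (-1:ℝ) 1, star (d1 t) * (d3 1 - d3 t) := by
      refine setIntegral_congr_fun measurableSet_Ioc (fun t ht => ?_)
      have ht' : t ∈ Icc (-1:ℝ) 1 := Ioc_subset_Icc_self ht
      have hintt : IntervalIntegrable d4 volume (-1) t := by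
        refine hd4i.mono_set ?_
        rw [uIcc_of_le ht'.1, uIcc_of_le hab]
        exact Icc_subset_Icc le_rfl ht'.2
      have h2 : ∫ x in Ioc t 1, d4 x = d3 1 - d3 t := by
        rw [← intervalIntegral.integral_of_le ht'.2,
          ← intervalIntegral.integral_interval_sub_left hd4i hintt,
          hd4FTC 1 (right_mem_Icc.2 hab), hd4FTC t ht']
        ring
      rw [h2]
    rw [hL, hR] at hswap
    have h3 : ∫ t in Ioc (-1:ℝ) 1, star (d1 t) * (d3 1 - d3 t)
        = ∫ t in (-1:ℝ)..1, (star (d1 t) * d3 1 - star (d1 t) * d3 t) := by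
      rw [intervalIntegral.integral_of_le hab]
      refine setIntegral_congr_fun measurableSet_Ioc (fun t _ => ?_)
      ring
    rw [h3, intervalIntegral.integral_sub (cInt (hsd1c.fun_mul continuousOn_const))
      (cInt (hsd1c.fun_mul hd3c)), intervalIntegral.integral_mul_const,
      intervalIntegral_star d1 (-1) 1 (cInt hd1c), hφFTC 1 (right_mem_Icc.2 hab),
      hbφp, star_zero, zero_mul, zero_sub, hIBP2] at hswap
    rw [intervalIntegral.integral_of_le hab, hswap, neg_neg]
  -- IBP4
  have hIBP4 : (∫ x in (-1:ℝ)..1, ((U1 x:ℝ):ℂ) * (star (φ x) * d1 x))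
      + ((∫ x in (-1:ℝ)..1, (U x - ν) * ‖d1 x‖^2 : ℝ):ℂ)
      + (∫ x in (-1:ℝ)..1, ((U x - ν:ℝ):ℂ) * (star (φ x) * d2 x)) = 0 := by
    have hder : ∀ x ∈ Ioo (-1:ℝ) 1, HasDerivAt (fun x => ((U x - ν:ℝ):ℂ) * (star (φ x) * d1 x))
        ((fun x => ((U1 x:ℝ):ℂ) * (star (φ x) * d1 x) + ((U x - ν:ℝ):ℂ) * (star (d1 x) * d1 x)
          + ((U x - ν:ℝ):ℂ) * (star (φ x) * d2 x)) x) x := by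
      intro x hx
      have h := (((interiorDerivR hU hx).sub_const ν).ofReal_comp).mul
        ((interiorDeriv hd1 hx).star.mul (interiorDeriv hd2 hx))
      convert h using 1
      · rfl
      · rfl
      change _ = ↑(U1 x) * (star (φ x) * d1 x) + _
      ring
    have h0 := myFTC (hUνcc.fun_mul (hsφc.fun_mul hd1c)) hder
      (cInt (((hU1cc.fun_mul (hsφc.fun_mul hd1c)).fun_add (hUνcc.fun_mul (hsd1c.fun_mul hd1c))).fun_add
        (hUνcc.fun_mul (hsφc.fun_mul hd2c))))
    rw [hbd1p, hbd1m, mul_zero, mul_zero, mul_zero, mul_zero, sub_zero] at h0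
    rw [intervalIntegral.integral_add (cInt ((hU1cc.fun_mul (hsφc.fun_mul hd1c)).fun_add
        (hUνcc.fun_mul (hsd1c.fun_mul hd1c)))) (cInt (hUνcc.fun_mul (hsφc.fun_mul hd2c))),
      intervalIntegral.integral_add (cInt (hU1cc.fun_mul (hsφc.fun_mul hd1c)))
        (cInt (hUνcc.fun_mul (hsd1c.fun_mul hd1c))),
      hreal (fun x => U x - ν) d1] at h0
    exact h0
  -- IBP5
  have hIBP5 : ((∫ x in (-1:ℝ)..1, U2 x * ‖φ x‖^2 : ℝ):ℂ)
      + (∫ x in (-1:ℝ)..1, ((U1 x:ℝ):ℂ) * (star (d1 x) * φ x))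
      + (∫ x in (-1:ℝ)..1, ((U1 x:ℝ):ℂ) * (star (φ x) * d1 x)) = 0 := by
    have hder : ∀ x ∈ Ioo (-1:ℝ) 1, HasDerivAt (fun x => ((U1 x:ℝ):ℂ) * (star (φ x) * φ x))
        ((fun x => ((U2 x:ℝ):ℂ) * (star (φ x) * φ x) + ((U1 x:ℝ):ℂ) * (star (d1 x) * φ x)
          + ((U1 x:ℝ):ℂ) * (star (φ x) * d1 x)) x) x := by
      intro x hx
      have h := ((interiorDerivR hU1 hx).ofReal_comp).mul
        ((interiorDeriv hd1 hx).star.mul (interiorDeriv hd1 hx))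
      convert h using 1
      · rfl
      · rfl
      change _ = ↑(U2 x) * (star (φ x) * φ x) + _
      ring
    have h0 := myFTC (hU1cc.fun_mul (hsφc.fun_mul hφc)) hder
      (cInt (((hU2cc.fun_mul (hsφc.fun_mul hφc)).fun_add (hU1cc.fun_mul (hsd1c.fun_mul hφc))).fun_add
        (hU1cc.fun_mul (hsφc.fun_mul hd1c))))
    rw [hbφp, hbφm, star_zero, zero_mul, mul_zero, mul_zero, sub_zero] at h0
    rw [intervalIntegral.integral_add (cInt ((hU2cc.fun_mul (hsφc.fun_mul hφc)).fun_add
        (hU1cc.fun_mul (hsd1c.fun_mul hφc)))) (cInt (hU1cc.fun_mul (hsφc.fun_mul hd1c))),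
      intervalIntegral.integral_add (cInt (hU2cc.fun_mul (hsφc.fun_mul hφc)))
        (cInt (hU1cc.fun_mul (hsd1c.fun_mul hφc))),
      hreal U2 φ] at h0
    exact h0
  -- conj symmetry of the U1 cross term
  have hconjE : (∫ x in (-1:ℝ)..1, ((U1 x:ℝ):ℂ) * (star (d1 x) * φ x))
      = star (∫ x in (-1:ℝ)..1, ((U1 x:ℝ):ℂ) * (star (φ x) * d1 x)) := by
    rw [← intervalIntegral_star _ (-1) 1 (cInt (hU1cc.fun_mul (hsφc.fun_mul hd1c)))]
    apply intervalIntegral.integral_congr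
    intro x _
    simp [Complex.star_def, Complex.conj_ofReal, mul_comm]
  -- real part of E
  have hEre : 2 * (∫ x in (-1:ℝ)..1, ((U1 x:ℝ):ℂ) * (star (φ x) * d1 x)).re
      = -(∫ x in (-1:ℝ)..1, U2 x * ‖φ x‖^2 : ℝ) := by
    have h := congrArg Complex.re hIBP5
    rw [hconjE] at h
    simp only [Complex.add_re, Complex.ofReal_re, Complex.zero_re] at h
    have hsr : (star (∫ x in (-1:ℝ)..1, ((U1 x:ℝ):ℂ) * (star (φ x) * d1 x))).re
        = (∫ x in (-1:ℝ)..1, ((U1 x:ℝ):ℂ) * (star (φ x) * d1 x)).re := by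
      simp [Complex.star_def]
    rw [hsr] at h
    linarith
  -- the paired equation
  have hcombo : ∀ᵐ x ∂volume, x ∈ Set.uIoc (-1:ℝ) 1 → star (φ x) * f x
      = star (φ x) * d4 x - ((α^2:ℝ):ℂ) * (star (φ x) * d2 x)
        + Complex.I * (β:ℝ) * (-(((U x - ν:ℝ):ℂ) * (star (φ x) * d2 x))
          + ((α^2:ℝ):ℂ) * (((U x - ν:ℝ):ℂ) * (star (φ x) * φ x))
          - Complex.I * (μ:ℝ) * (star (φ x) * d2 x)
          + Complex.I * (μ:ℝ) * ((α^2:ℝ):ℂ) * (star (φ x) * φ x)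
          + ((U2 x:ℝ):ℂ) * (star (φ x) * φ x)) := by
    filter_upwards [ae_imp_of_ae_restrict heq] with x hx hxI
    rw [uIoc_of_le hab] at hxI
    rw [← hx hxI]
    push_cast [Complex.star_def]
    ring
  have iB1 : IntervalIntegrable (fun x => star (φ x) * d4 x) volume (-1) 1 :=
    hd4i.continuousOn_mul (by rw [uIcc_of_le hab]; exact hsφc)
  have iB2 : IntervalIntegrable (fun x => star (φ x) * d2 x) volume (-1) 1 :=
    cInt (hsφc.fun_mul hd2c)
  have iB3 : IntervalIntegrable (fun x => ((U x - ν:ℝ):ℂ) * (star (φ x) * d2 x)) volume (-1) 1 :=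
    cInt (hUνcc.fun_mul (hsφc.fun_mul hd2c))
  have iB4 : IntervalIntegrable (fun x => ((U x - ν:ℝ):ℂ) * (star (φ x) * φ x)) volume (-1) 1 :=
    cInt (hUνcc.fun_mul (hsφc.fun_mul hφc))
  have iB5 : IntervalIntegrable (fun x => star (φ x) * φ x) volume (-1) 1 :=
    cInt (hsφc.fun_mul hφc)
  have iB6 : IntervalIntegrable (fun x => ((U2 x:ℝ):ℂ) * (star (φ x) * φ x)) volume (-1) 1 :=
    cInt (hU2cc.fun_mul (hsφc.fun_mul hφc))
  have iB3n : IntervalIntegrable (fun x => -(((U x - ν:ℝ):ℂ) * (star (φ x) * d2 x))) volume (-1) 1 :=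
    iB3.neg
  have hJ : (∫ x in (-1:ℝ)..1, star (φ x) * f x)
      = (∫ x in (-1:ℝ)..1, star (φ x) * d4 x)
        - ((α^2:ℝ):ℂ) * (∫ x in (-1:ℝ)..1, star (φ x) * d2 x)
        + Complex.I * (β:ℝ) * (-(∫ x in (-1:ℝ)..1, ((U x - ν:ℝ):ℂ) * (star (φ x) * d2 x))
          + ((α^2:ℝ):ℂ) * (∫ x in (-1:ℝ)..1, ((U x - ν:ℝ):ℂ) * (star (φ x) * φ x))
          - Complex.I * (μ:ℝ) * (∫ x in (-1:ℝ)..1, star (φ x) * d2 x)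
          + Complex.I * (μ:ℝ) * ((α^2:ℝ):ℂ) * (∫ x in (-1:ℝ)..1, star (φ x) * φ x)
          + (∫ x in (-1:ℝ)..1, ((U2 x:ℝ):ℂ) * (star (φ x) * φ x))) := by
    rw [intervalIntegral.integral_congr_ae hcombo]
    rw [intervalIntegral.integral_add (iB1.sub (iB2.const_mul _))
        (((((iB3n.add (iB4.const_mul _)).sub (iB2.const_mul _)).add
          ((iB5.const_mul _))).add iB6).const_mul _),
      intervalIntegral.integral_sub iB1 (iB2.const_mul _),
      intervalIntegral.integral_const_mul,
      intervalIntegral.integral_const_mul,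
      intervalIntegral.integral_add (((iB3n.add (iB4.const_mul _)).sub
        (iB2.const_mul _)).add (iB5.const_mul _)) iB6,
      intervalIntegral.integral_add ((iB3n.add (iB4.const_mul _)).sub
        (iB2.const_mul _)) (iB5.const_mul _),
      intervalIntegral.integral_sub (iB3n.add (iB4.const_mul _)) (iB2.const_mul _),
      intervalIntegral.integral_add iB3n (iB4.const_mul _),
      intervalIntegral.integral_neg,
      intervalIntegral.integral_const_mul,
      intervalIntegral.integral_const_mul,
      intervalIntegral.integral_const_mul]
  -- abbreviations
  set rD1 := ∫ x in (-1:ℝ)..1, ‖d1 x‖^2 with hrD1def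
  set rD2 := ∫ x in (-1:ℝ)..1, ‖d2 x‖^2 with hrD2def
  set rP := ∫ x in (-1:ℝ)..1, ‖φ x‖^2 with hrPdef
  set rF := ∫ x in (-1:ℝ)..1, ‖f x‖^2 with hrFdef
  set rA' := ∫ x in (-1:ℝ)..1, (U x - ν) * ‖d1 x‖^2 with hrAdef
  set rB' := ∫ x in (-1:ℝ)..1, (U x - ν) * ‖φ x‖^2 with hrBdef
  set rC := ∫ x in (-1:ℝ)..1, U2 x * ‖φ x‖^2 with hrCdef
  set EE := ∫ x in (-1:ℝ)..1, ((U1 x:ℝ):ℂ) * (star (φ x) * d1 x) with hEEdef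
  -- substitute into hJ
  have hB3 := eq_neg_of_add_eq_zero_right hIBP4
  have hB4 : (∫ x in (-1:ℝ)..1, ((U x - ν:ℝ):ℂ) * (star (φ x) * φ x)) = ((rB' : ℝ):ℂ) :=
    hreal (fun x => U x - ν) φ
  have hB5 : (∫ x in (-1:ℝ)..1, star (φ x) * φ x) = ((rP : ℝ):ℂ) := hreal0 φ
  have hB6 : (∫ x in (-1:ℝ)..1, ((U2 x:ℝ):ℂ) * (star (φ x) * φ x)) = ((rC : ℝ):ℂ) :=
    hreal U2 φ
  rw [hS1, hIBP3, hB3, hB4, hB5, hB6] at hJ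
  -- imaginary part identity
  have hJim : (∫ x in (-1:ℝ)..1, star (φ x) * f x).im
      = β * (rA' + α^2*rB' + rC + EE.re) := by
    rw [hJ]
    simp only [Complex.add_im, Complex.sub_im, Complex.mul_im, Complex.mul_re,
      Complex.neg_re, Complex.neg_im, Complex.I_re, Complex.I_im, Complex.ofReal_re,
      Complex.ofReal_im, Complex.add_re, Complex.sub_re]
    ring
  have hJim2 : (∫ x in (-1:ℝ)..1, star (φ x) * f x).im
      = β * (rA' + α^2*rB' + rC/2) := by
    rw [hJim]
    have h : EE.re = -rC/2 := by linarith
    rw [h]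
    ring
  -- Cauchy-Schwarz bound on J
  obtain ⟨Mφ, hMφ⟩ := isCompact_Icc.exists_bound_of_continuousOn hφc
  have hmemφ : MemLp φ 2 (volume.restrict (Ioc (-1:ℝ) 1)) :=
    MemLp.of_bound ((hφc.mono Ioc_subset_Icc_self).aestronglyMeasurable measurableSet_Ioc) Mφ
      ((ae_restrict_iff' measurableSet_Ioc).2 (ae_of_all _ fun x hx =>
        hMφ x (Ioc_subset_Icc_self hx)))
  have hJabs : |(∫ x in (-1:ℝ)..1, star (φ x) * f x).im| ≤ Real.sqrt rP * Real.sqrt rF := by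
    have h1 : |(∫ x in (-1:ℝ)..1, star (φ x) * f x).im|
        ≤ ‖∫ x in (-1:ℝ)..1, star (φ x) * f x‖ := Complex.abs_im_le_norm _
    have h2 : ‖∫ x in (-1:ℝ)..1, star (φ x) * f x‖
        ≤ ∫ x in (-1:ℝ)..1, ‖star (φ x) * f x‖ :=
      intervalIntegral.norm_integral_le_integral_norm hab
    have h3 : (∫ x in (-1:ℝ)..1, ‖star (φ x) * f x‖)
        = ∫ x in Ioc (-1:ℝ) 1, ‖φ x‖ * ‖f x‖ := by
      rw [intervalIntegral.integral_of_le hab]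
      refine setIntegral_congr_fun measurableSet_Ioc (fun x _ => ?_)
      rw [norm_mul, norm_star]
    have h4 := cs2 (μ := volume.restrict (Ioc (-1:ℝ) 1)) hmemφ hf
    have h5 : Real.sqrt rP = Real.sqrt (∫ x in Ioc (-1:ℝ) 1, ‖φ x‖^2) := by
      rw [hrPdef, intervalIntegral.integral_of_le hab]
    have h6 : Real.sqrt rF = Real.sqrt (∫ x in Ioc (-1:ℝ) 1, ‖f x‖^2) := by
      rw [hrFdef, intervalIntegral.integral_of_le hab]
    rw [h5, h6]
    calc |(∫ x in (-1:ℝ)..1, star (φ x) * f x).im|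
        ≤ ∫ x in Ioc (-1:ℝ) 1, ‖φ x‖ * ‖f x‖ := by rw [← h3]; exact h1.trans h2
      _ ≤ _ := h4
  -- Poincaré inequality : rP ≤ 2 * rD1
  have hrD1nonneg : 0 ≤ rD1 :=
    intervalIntegral.integral_nonneg hab (fun x _ => sq_nonneg _)
  have hrPnonneg : 0 ≤ rP :=
    intervalIntegral.integral_nonneg hab (fun x _ => sq_nonneg _)
  have hptw : ∀ x ∈ Icc (-1:ℝ) 1, ‖φ x‖^2 ≤ (x+1) * rD1 := by
    intro x hx
    haveI : IsFiniteMeasure (volume.restrict (Ioc (-1:ℝ) x)) :=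
      ⟨by rw [Measure.restrict_apply_univ]; exact measure_Ioc_lt_top⟩
    have hd1mem : MemLp d1 2 (volume.restrict (Ioc (-1:ℝ) x)) := by
      obtain ⟨M1, hM1⟩ := isCompact_Icc.exists_bound_of_continuousOn hd1c
      exact MemLp.of_bound (((hd1c.mono (Icc_subset_Icc le_rfl hx.2)).mono
          Ioc_subset_Icc_self).aestronglyMeasurable measurableSet_Ioc) M1
        ((ae_restrict_iff' measurableSet_Ioc).2 (ae_of_all _ fun t ht =>
          hM1 t (Icc_subset_Icc le_rfl hx.2 (Ioc_subset_Icc_self ht))))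
    have honemem : MemLp (fun _ : ℝ => (1:ℂ)) 2 (volume.restrict (Ioc (-1:ℝ) x)) :=
      memLp_const 1
    have hcs := cs2 (μ := volume.restrict (Ioc (-1:ℝ) x)) hd1mem honemem
    simp only [norm_one, mul_one, one_pow] at hcs
    have hvol : ∫ (_ : ℝ) in Ioc (-1:ℝ) x, (1:ℝ) = x + 1 := by
      rw [setIntegral_const, Real.volume_real_Ioc, smul_eq_mul, mul_one,
        max_eq_left (by linarith [hx.1])]
      ring
    have hnrm : ‖φ x‖ ≤ ∫ t in Ioc (-1:ℝ) x, ‖d1 t‖ := by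
      have := hφFTC x hx
      calc ‖φ x‖ = ‖∫ t in (-1:ℝ)..x, d1 t‖ := by rw [this]
        _ ≤ ∫ t in (-1:ℝ)..x, ‖d1 t‖ := intervalIntegral.norm_integral_le_integral_norm hx.1
        _ = _ := intervalIntegral.integral_of_le hx.1
    have hQle : (∫ t in Ioc (-1:ℝ) x, ‖d1 t‖^2) ≤ rD1 := by
      rw [hrD1def, intervalIntegral.integral_of_le hab]
      refine setIntegral_mono_set ?_ ?_ ?_
      · have : ContinuousOn (fun t => ‖d1 t‖^2) (Icc (-1:ℝ) 1) := (hd1c.norm.pow 2)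
        exact (this.integrableOn_compact isCompact_Icc).mono_set Ioc_subset_Icc_self
      · exact (ae_restrict_iff' measurableSet_Ioc).2 (ae_of_all _ fun t _ => sq_nonneg _)
      · exact HasSubset.Subset.eventuallyLE (Ioc_subset_Ioc_right hx.2)
    have hsq : ‖φ x‖^2 ≤ (Real.sqrt (∫ t in Ioc (-1:ℝ) x, ‖d1 t‖^2) * Real.sqrt (x+1))^2 := by
      have hrhs : 0 ≤ Real.sqrt (∫ t in Ioc (-1:ℝ) x, ‖d1 t‖^2) * Real.sqrt (x+1) :=
        mul_nonneg (Real.sqrt_nonneg _) (Real.sqrt_nonneg _)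
      refine pow_le_pow_left₀ (norm_nonneg _) ?_ 2
      calc ‖φ x‖ ≤ ∫ t in Ioc (-1:ℝ) x, ‖d1 t‖ := hnrm
        _ ≤ Real.sqrt (∫ t in Ioc (-1:ℝ) x, ‖d1 t‖^2) * Real.sqrt (∫ (_:ℝ) in Ioc (-1:ℝ) x, (1:ℝ)) := hcs
        _ = Real.sqrt (∫ t in Ioc (-1:ℝ) x, ‖d1 t‖^2) * Real.sqrt (x+1) := by rw [hvol]
    have hQnonneg : 0 ≤ ∫ t in Ioc (-1:ℝ) x, ‖d1 t‖^2 :=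
      setIntegral_nonneg measurableSet_Ioc (fun t _ => sq_nonneg _)
    calc ‖φ x‖^2 ≤ (Real.sqrt (∫ t in Ioc (-1:ℝ) x, ‖d1 t‖^2) * Real.sqrt (x+1))^2 := hsq
      _ = (∫ t in Ioc (-1:ℝ) x, ‖d1 t‖^2) * (x+1) := by
          rw [mul_pow, Real.sq_sqrt hQnonneg, Real.sq_sqrt (by linarith [hx.1])]
      _ ≤ rD1 * (x+1) := mul_le_mul_of_nonneg_right hQle (by linarith [hx.1])
      _ = (x+1) * rD1 := by ring
  have hPoin : rP ≤ 2 * rD1 := by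
    have hmono := intervalIntegral.integral_mono_on hab
      (cIntR (hφc.norm.pow 2))
      (cIntR (((continuousOn_id.add continuousOn_const)).mul continuousOn_const)) hptw
    have hrhs : (∫ x in (-1:ℝ)..1, (x+1) * rD1) = 2 * rD1 := by
      rw [intervalIntegral.integral_mul_const]
      have : (∫ x in (-1:ℝ)..1, (x+1)) = 2 := by
        rw [intervalIntegral.integral_add intervalIntegrable_id intervalIntegrable_const,
          integral_id, intervalIntegral.integral_const]
        norm_num
      rw [this]
    rw [hrPdef]
    calc (∫ x in (-1:ℝ)..1, ‖φ x‖^2) ≤ ∫ x in (-1:ℝ)..1, (x+1) * rD1 := hmono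
      _ = 2 * rD1 := hrhs
  -- numeric bounds
  have hMUpos : 0 ≤ MU := le_trans (abs_nonneg _) (hMU 0 ⟨by norm_num, by norm_num⟩)
  have hMU2pos : 0 ≤ MU2 := le_trans (abs_nonneg _) (hMU2 0 ⟨by norm_num, by norm_num⟩)
  have hν2 : (0:ℝ) < ν := by linarith
  have hβν : (0:ℝ) < β * ν := mul_pos hβ hν2
  have hA'' : rA' ≤ (MU - ν) * rD1 := by
    have hm := intervalIntegral.integral_mono_on
      (f := fun x => (U x - ν) * ‖d1 x‖^2) (g := fun x => (MU - ν) * ‖d1 x‖^2) hab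
      (cIntR ((hUc.sub continuousOn_const).mul (hd1c.norm.pow 2)))
      (cIntR (continuousOn_const.mul (hd1c.norm.pow 2)))
      (fun x hx => mul_le_mul_of_nonneg_right
        (by have := (abs_le.1 (hMU x hx)).2; linarith) (sq_nonneg ‖d1 x‖))
    rw [hrAdef, hrD1def]
    rwa [intervalIntegral.integral_const_mul] at hm
  have hB'' : rB' ≤ (MU - ν) * rP := by
    have hm := intervalIntegral.integral_mono_on
      (f := fun x => (U x - ν) * ‖φ x‖^2) (g := fun x => (MU - ν) * ‖φ x‖^2) hab
      (cIntR ((hUc.sub continuousOn_const).mul (hφc.norm.pow 2)))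
      (cIntR (continuousOn_const.mul (hφc.norm.pow 2)))
      (fun x hx => mul_le_mul_of_nonneg_right
        (by have := (abs_le.1 (hMU x hx)).2; linarith) (sq_nonneg ‖φ x‖))
    rw [hrBdef, hrPdef]
    rwa [intervalIntegral.integral_const_mul] at hm
  have hC'' : rC ≤ MU2 * rP := by
    have hm := intervalIntegral.integral_mono_on
      (f := fun x => U2 x * ‖φ x‖^2) (g := fun x => MU2 * ‖φ x‖^2) hab
      (cIntR (hU2c.mul (hφc.norm.pow 2)))
      (cIntR (continuousOn_const.mul (hφc.norm.pow 2)))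
      (fun x hx => mul_le_mul_of_nonneg_right
        (by have := (abs_le.1 (hMU2 x hx)).2; linarith) (sq_nonneg ‖φ x‖))
    rw [hrCdef, hrPdef]
    rwa [intervalIntegral.integral_const_mul] at hm
  have ht1 : α^2*rB' ≤ (MU - ν)*(α^2*rP) := by
    calc α^2*rB' ≤ α^2*((MU - ν)*rP) := mul_le_mul_of_nonneg_left hB'' (sq_nonneg α)
      _ = (MU - ν)*(α^2*rP) := by ring
  have ht2 : MU2*rP ≤ MU2*(2*rD1) := mul_le_mul_of_nonneg_left hPoin hMU2pos
  have h5 : (0:ℝ) ≤ (ν/2 - MU - MU2) * rD1 :=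
    mul_nonneg (by linarith) hrD1nonneg
  have h6 : (0:ℝ) ≤ (ν/2 - MU) * (α^2*rP) :=
    mul_nonneg (by linarith) (mul_nonneg (sq_nonneg α) hrPnonneg)
  have hXcore : (ν/2)*(rD1 + α^2*rP) ≤ -(rA' + α^2*rB' + rC/2) := by
    nlinarith [hA'', ht1, hC'', ht2, h5, h6]
  have hfinal : β*((ν/2)*(rD1 + α^2*rP)) ≤ Real.sqrt rP * Real.sqrt rF := by
    have hx1 : β*((ν/2)*(rD1 + α^2*rP)) ≤ β*(-(rA' + α^2*rB' + rC/2)) :=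
      mul_le_mul_of_nonneg_left hXcore hβ.le
    have hx2 : β*(-(rA' + α^2*rB' + rC/2))
        = -(∫ x in (-1:ℝ)..1, star (φ x) * f x).im := by
      rw [hJim2]; ring
    have hx3 : -(∫ x in (-1:ℝ)..1, star (φ x) * f x).im
        ≤ |(∫ x in (-1:ℝ)..1, star (φ x) * f x).im| := neg_le_abs _
    linarith [hJabs]
  rw [div_mul_eq_mul_div, div_mul_eq_mul_div, le_div_iff₀ hβν]
  nlinarith [hfinal]
end

section
/- Let $U \in C^1([-1,1])$ be real-valued, let $\alpha \geq 0$, $\beta > 0$, and $\lambda = \mu + i\nu$ with $\mu \leq -2(\|U'\|_\infty^2 + \|U\|_\infty + 1)$. If $\phi \in H^4(-1,1)$ with $\phi(\pm 1) = \phi'(\pm 1) = 0$ satisfies $\big(-\tfrac{d^2}{dx^2} + i\beta(U + i\lambda)\big)(-\phi'' + \alpha^2\phi) + i\beta U'' \phi = f$, then $\|\phi'\|_{L^2}^2 + \alpha^2\|\phi\|_{L^2}^2 \leq \frac{2}{\beta|\mu|}\|\phi\|_{L^2}\|f\|_{L^2}$. -/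
open MeasureTheory Set

/-- Triangle Fubini: swap order of integration over `{-1 < x < t < 1}`. -/
lemma stmt11_swap (g h : ℝ → ℂ) (hg : IntegrableOn g (Ioo (-1:ℝ) 1) volume)
    (hh : IntegrableOn h (Ioo (-1:ℝ) 1) volume) :
    ∫ x in Ioo (-1:ℝ) 1, (∫ t in Ioo x 1, h t) * g x
      = ∫ t in Ioo (-1:ℝ) 1, h t * ∫ x in Ioo (-1:ℝ) t, g x := by
  have hS : MeasurableSet {q : ℝ × ℝ | q.1 < q.2} :=
    measurableSet_lt measurable_fst measurable_snd
  set m := volume.restrict (Ioo (-1:ℝ) 1) with hm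
  set F : ℝ → ℝ → ℂ := fun x t =>
    ({q : ℝ × ℝ | q.1 < q.2}.indicator (fun q => g q.1 * h q.2) (x, t)) with hF
  have hFint : Integrable (Function.uncurry F) (m.prod m) := by
    have : Function.uncurry F
        = fun p : ℝ × ℝ => {q : ℝ × ℝ | q.1 < q.2}.indicator (fun q => g q.1 * h q.2) p := rfl
    rw [this]
    exact (Integrable.mul_prod hg hh).indicator hS
  have hswap := MeasureTheory.integral_integral_swap hFint
  have hL : ∫ x, ∫ t, F x t ∂m ∂m = ∫ x in Ioo (-1:ℝ) 1, (∫ t in Ioo x 1, h t) * g x := by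
    rw [hm]
    apply setIntegral_congr_fun measurableSet_Ioo
    intro x hx
    have h1 : ∀ t, F x t = (Ioi x).indicator (fun t => g x * h t) t := by
      intro t
      simp [hF, Set.indicator_apply, Set.mem_setOf_eq, Set.mem_Ioi]
    show (∫ t in Ioo (-1:ℝ) 1, F x t) = _
    simp only [h1]
    rw [integral_indicator measurableSet_Ioi,
      Measure.restrict_restrict measurableSet_Ioi]
    have h2 : Ioi x ∩ Ioo (-1:ℝ) 1 = Ioo x 1 := by
      ext y
      simp only [mem_inter_iff, mem_Ioi, mem_Ioo]
      constructor
      · rintro ⟨h1', h2', h3'⟩; exact ⟨h1', h3'⟩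
      · rintro ⟨h1', h2'⟩; exact ⟨h1', lt_trans hx.1 h1', h2'⟩
    rw [h2, MeasureTheory.integral_const_mul, mul_comm]
  have hR : ∫ t, ∫ x, F x t ∂m ∂m = ∫ t in Ioo (-1:ℝ) 1, h t * ∫ x in Ioo (-1:ℝ) t, g x := by
    rw [hm]
    apply setIntegral_congr_fun measurableSet_Ioo
    intro t ht
    have h1 : ∀ x, F x t = (Iio t).indicator (fun x => g x * h t) x := by
      intro x
      simp [hF, Set.indicator_apply, Set.mem_setOf_eq, Set.mem_Iio]
    show (∫ x in Ioo (-1:ℝ) 1, F x t) = _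
    simp only [h1]
    rw [integral_indicator measurableSet_Iio,
      Measure.restrict_restrict measurableSet_Iio]
    have h2 : Iio t ∩ Ioo (-1:ℝ) 1 = Ioo (-1:ℝ) t := by
      ext y
      simp only [mem_inter_iff, mem_Iio, mem_Ioo]
      constructor
      · rintro ⟨h1', h2', h3'⟩; exact ⟨h2', h1'⟩
      · rintro ⟨h1', h2'⟩; exact ⟨h2', h1', lt_trans h2' ht.2⟩
    rw [h2, MeasureTheory.integral_mul_const, mul_comm]
  rw [← hL, ← hR]
  exact hswap

set_option maxHeartbeats 4000000 in
/-- energy estimate for the Orr–Sommerfeld operator in the regime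
`Re λ ≪ 0`.  `U` real with derivatives `U1 = U'`, `U2 = U''`, `α ≥ 0`, `β > 0`,
`λ = μ + iν` with `μ ≤ -2(‖U'‖_∞² + ‖U‖_∞ + 1)`.  `φ ∈ H⁴(-1,1)` with
`φ(±1) = φ'(±1) = 0` satisfies
`(-d²/dx² + iβ(U+iλ))(-φ'' + α²φ) + iβU''φ = f` a.e.; then
`‖φ'‖² + α²‖φ‖² ≤ (2/(β|μ|))‖φ‖_{L²}‖f‖_{L²}`. -/
theorem stmt11 (U U1 U2 : ℝ → ℝ)
    (hU : ∀ x ∈ Set.Icc (-1:ℝ) 1, HasDerivWithinAt U (U1 x) (Set.Icc (-1:ℝ) 1) x)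
    (hU1 : ∀ x ∈ Set.Icc (-1:ℝ) 1, HasDerivWithinAt U1 (U2 x) (Set.Icc (-1:ℝ) 1) x)
    (hU2c : ContinuousOn U2 (Set.Icc (-1:ℝ) 1))
    (MU MU1 : ℝ)
    (hMU : ∀ x ∈ Set.Icc (-1:ℝ) 1, |U x| ≤ MU)
    (hMU1 : ∀ x ∈ Set.Icc (-1:ℝ) 1, |U1 x| ≤ MU1)
    (α β μ ν : ℝ) (hα : 0 ≤ α) (hβ : 0 < β)
    (hμ : μ ≤ -2 * (MU1 ^ 2 + MU + 1))
    (φ d1 d2 d3 d4 f : ℝ → ℂ)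
    (hd1 : ∀ x ∈ Set.Icc (-1:ℝ) 1, HasDerivWithinAt φ (d1 x) (Set.Icc (-1:ℝ) 1) x)
    (hd2 : ∀ x ∈ Set.Icc (-1:ℝ) 1, HasDerivWithinAt d1 (d2 x) (Set.Icc (-1:ℝ) 1) x)
    (hd3 : ∀ x ∈ Set.Icc (-1:ℝ) 1, HasDerivWithinAt d2 (d3 x) (Set.Icc (-1:ℝ) 1) x)
    (hd4FTC : ∀ x ∈ Set.Icc (-1:ℝ) 1, d3 x = d3 (-1) + ∫ t in (-1:ℝ)..x, d4 t)
    (hd4 : MeasureTheory.MemLp d4 2 (MeasureTheory.volume.restrict (Set.Ioo (-1:ℝ) 1)))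
    (hd4i : IntervalIntegrable d4 MeasureTheory.volume (-1) 1)
    (hf : MeasureTheory.MemLp f 2 (MeasureTheory.volume.restrict (Set.Ioo (-1:ℝ) 1)))
    (hbφm : φ (-1) = 0) (hbφp : φ 1 = 0) (hbd1m : d1 (-1) = 0) (hbd1p : d1 1 = 0)
    (heq : ∀ᵐ x ∂(MeasureTheory.volume.restrict (Set.Ioo (-1:ℝ) 1)),
      d4 x - (α : ℂ) ^ 2 * d2 x
        + Complex.I * (β : ℂ) * (((U x - ν : ℝ) : ℂ) + Complex.I * (μ : ℂ)) *
            (-(d2 x) + (α : ℂ) ^ 2 * φ x)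
        + Complex.I * (β : ℂ) * ((U2 x : ℝ) : ℂ) * φ x = f x) :
    (∫ x in (-1:ℝ)..1, ‖d1 x‖ ^ 2) + α ^ 2 * ∫ x in (-1:ℝ)..1, ‖φ x‖ ^ 2
      ≤ (2 / (β * |μ|)) * Real.sqrt (∫ x in (-1:ℝ)..1, ‖φ x‖ ^ 2) *
          Real.sqrt (∫ x in (-1:ℝ)..1, ‖f x‖ ^ 2) := by
  have h11 : (-1:ℝ) ≤ 1 := by norm_num
  have huIcc : uIcc (-1:ℝ) 1 = Icc (-1:ℝ) 1 := uIcc_of_le h11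
  have hsub : Ioo (-1:ℝ) 1 ⊆ Icc (-1:ℝ) 1 := Ioo_subset_Icc_self
  have hm1 : (-1:ℝ) ∈ Icc (-1:ℝ) 1 := by constructor <;> norm_num
  have hp1 : (1:ℝ) ∈ Icc (-1:ℝ) 1 := by constructor <;> norm_num
  haveI hfin : IsFiniteMeasure (volume.restrict (Ioo (-1:ℝ) 1)) := by
    constructor
    rw [Measure.restrict_apply_univ, Real.volume_Ioo]
    exact ENNReal.ofReal_lt_top
  -- conversions between interval and set integrals
  have hcc : ∀ g : ℝ → ℂ, ∫ x in (-1:ℝ)..1, g x = ∫ x in Ioo (-1:ℝ) 1, g x := fun g => by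
    rw [intervalIntegral.integral_of_le h11, integral_Ioc_eq_integral_Ioo]
  have hcr : ∀ g : ℝ → ℝ, ∫ x in (-1:ℝ)..1, g x = ∫ x in Ioo (-1:ℝ) 1, g x := fun g => by
    rw [intervalIntegral.integral_of_le h11, integral_Ioc_eq_integral_Ioo]
  -- continuity
  have cφ : ContinuousOn φ (Icc (-1:ℝ) 1) := fun x hx => (hd1 x hx).continuousWithinAt
  have cd1 : ContinuousOn d1 (Icc (-1:ℝ) 1) := fun x hx => (hd2 x hx).continuousWithinAt
  have cd2 : ContinuousOn d2 (Icc (-1:ℝ) 1) := fun x hx => (hd3 x hx).continuousWithinAt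
  have cU : ContinuousOn U (Icc (-1:ℝ) 1) := fun x hx => (hU x hx).continuousWithinAt
  have cU1 : ContinuousOn U1 (Icc (-1:ℝ) 1) := fun x hx => (hU1 x hx).continuousWithinAt
  have cd3 : ContinuousOn d3 (Icc (-1:ℝ) 1) := by
    have hint : IntegrableOn d4 (uIcc (-1:ℝ) 1) volume := by
      rw [huIcc]
      rw [integrableOn_Icc_iff_integrableOn_Ioc]
      exact hd4i.1
    have := intervalIntegral.continuousOn_primitive_interval hint
    rw [huIcc] at this
    exact (continuousOn_const.add this).congr fun x hx => hd4FTC x hx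
  -- derivative of conj φ and of (U - ν : ℂ)
  have hconjd : ∀ x ∈ Icc (-1:ℝ) 1,
      HasDerivWithinAt (fun t => (starRingEnd ℂ) (φ t)) ((starRingEnd ℂ) (d1 x))
        (Icc (-1:ℝ) 1) x := by
    intro x hx
    simpa [Complex.star_def] using (hd1 x hx).star
  have hconjd1 : ∀ x ∈ Icc (-1:ℝ) 1,
      HasDerivWithinAt (fun t => (starRingEnd ℂ) (d1 t)) ((starRingEnd ℂ) (d2 x))
        (Icc (-1:ℝ) 1) x := by
    intro x hx
    simpa [Complex.star_def] using (hd2 x hx).star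
  have ccφ : ContinuousOn (fun t => (starRingEnd ℂ) (φ t)) (Icc (-1:ℝ) 1) :=
    fun x hx => ((hconjd x hx).continuousWithinAt)
  have ccd1 : ContinuousOn (fun t => (starRingEnd ℂ) (d1 t)) (Icc (-1:ℝ) 1) :=
    fun x hx => ((hconjd1 x hx).continuousWithinAt)
  have ccd2 : ContinuousOn (fun t => (starRingEnd ℂ) (d2 t)) (Icc (-1:ℝ) 1) :=
    Complex.continuous_conj.comp_continuousOn cd2
  have hUν : ∀ x ∈ Icc (-1:ℝ) 1,
      HasDerivWithinAt (fun t => ((U t - ν : ℝ) : ℂ)) ((U1 x : ℝ) : ℂ) (Icc (-1:ℝ) 1) x := by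
    intro x hx
    have h0 : HasDerivWithinAt (fun t => U t - ν) (U1 x) (Icc (-1:ℝ) 1) x :=
      (hU x hx).sub_const ν
    simpa [Function.comp_def, Complex.ofRealCLM_apply, Complex.ofReal_sub] using Complex.ofRealCLM.hasFDerivAt.comp_hasDerivWithinAt x h0
  have cUν : ContinuousOn (fun t => ((U t - ν : ℝ) : ℂ)) (Icc (-1:ℝ) 1) :=
    fun x hx => (hUν x hx).continuousWithinAt
  -- FTC helper
  have hmem : ∀ x ∈ Ioo (-1:ℝ) 1, Icc (-1:ℝ) 1 ∈ nhdsWithin x (Ioi x) := fun x hx =>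
    mem_nhdsWithin_of_mem_nhds (Filter.mem_of_superset (Ioo_mem_nhds hx.1 hx.2) hsub)
  have ftc : ∀ (g g' : ℝ → ℂ),
      (∀ x ∈ Icc (-1:ℝ) 1, HasDerivWithinAt g (g' x) (Icc (-1:ℝ) 1) x) →
      ContinuousOn g' (Icc (-1:ℝ) 1) →
      ∀ a ∈ Icc (-1:ℝ) 1, ∀ b ∈ Icc (-1:ℝ) 1, a ≤ b →
      ∫ t in a..b, g' t = g b - g a := by
    intro g g' hg hg' a ha b hb hab
    have cg : ContinuousOn g (Icc (-1:ℝ) 1) := fun x hx => (hg x hx).continuousWithinAt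
    refine intervalIntegral.integral_eq_sub_of_hasDeriv_right_of_le hab
      (cg.mono (Icc_subset_Icc ha.1 hb.2))
      (fun x hx => (hg x (hsub (Ioo_subset_Ioo ha.1 hb.2 hx))).mono_of_mem_nhdsWithin
        (hmem x (Ioo_subset_Ioo ha.1 hb.2 hx))) ?_
    have : ContinuousOn g' (uIcc a b) := by
      rw [uIcc_of_le hab]; exact hg'.mono (Icc_subset_Icc ha.1 hb.2)
    exact this.intervalIntegrable
  -- integration by parts helper
  have ibp : ∀ (u u' v v' : ℝ → ℂ),
      (∀ x ∈ Icc (-1:ℝ) 1, HasDerivWithinAt u (u' x) (Icc (-1:ℝ) 1) x) →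
      (∀ x ∈ Icc (-1:ℝ) 1, HasDerivWithinAt v (v' x) (Icc (-1:ℝ) 1) x) →
      ContinuousOn u' (Icc (-1:ℝ) 1) → ContinuousOn v' (Icc (-1:ℝ) 1) →
      ∫ x in (-1:ℝ)..1, u x * v' x
        = u 1 * v 1 - u (-1) * v (-1) - ∫ x in (-1:ℝ)..1, u' x * v x := by
    intro u u' v v' hu hv hu' hv'
    refine intervalIntegral.integral_mul_deriv_eq_deriv_mul_of_hasDerivWithinAt ?_ ?_ ?_ ?_
    · rw [huIcc]; exact hu
    · rw [huIcc]; exact hv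
    · exact (huIcc ▸ hu' : ContinuousOn u' (uIcc (-1:ℝ) 1)).intervalIntegrable
    · exact (huIcc ▸ hv' : ContinuousOn v' (uIcc (-1:ℝ) 1)).intervalIntegrable
  -- integrability helpers
  have hIntC : ∀ g : ℝ → ℂ, ContinuousOn g (Icc (-1:ℝ) 1) → IntegrableOn g (Ioo (-1:ℝ) 1) volume :=
    fun g hg => (hg.integrableOn_Icc).mono_set hsub
  have hmeasC : ∀ g : ℝ → ℂ, ContinuousOn g (Icc (-1:ℝ) 1) →
      AEStronglyMeasurable g (volume.restrict (Ioo (-1:ℝ) 1)) :=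
    fun g hg => (hg.mono hsub).aestronglyMeasurable measurableSet_Ioo
  have hd4int : Integrable d4 (volume.restrict (Ioo (-1:ℝ) 1)) := hd4.integrable (by norm_num)
  have hfint : Integrable f (volume.restrict (Ioo (-1:ℝ) 1)) := hf.integrable (by norm_num)
  obtain ⟨Cφ, hCφ⟩ : ∃ C, ∀ x ∈ Icc (-1:ℝ) 1, ‖φ x‖ ≤ C :=
    isCompact_Icc.exists_bound_of_continuousOn cφ
  have hφb : ∀ᵐ x ∂(volume.restrict (Ioo (-1:ℝ) 1)), ‖(starRingEnd ℂ) (φ x)‖ ≤ Cφ := by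
    filter_upwards [ae_restrict_mem measurableSet_Ioo] with x hx
    rw [RCLike.norm_conj]
    exact hCφ x (hsub hx)
  -- FTC corollaries
  have hφeq : ∀ x ∈ Icc (-1:ℝ) 1, φ x = ∫ t in (-1:ℝ)..x, d1 t := by
    intro x hx
    rw [ftc φ d1 hd1 cd1 (-1) hm1 x hx hx.1, hbφm, sub_zero]
  have hconjtail : ∀ x ∈ Icc (-1:ℝ) 1,
      (starRingEnd ℂ) (φ x) = -∫ t in Ioo x 1, (starRingEnd ℂ) (d1 t) := by
    intro x hx
    have h := ftc (fun t => (starRingEnd ℂ) (φ t)) (fun t => (starRingEnd ℂ) (d1 t))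
      hconjd ccd1 x hx 1 hp1 hx.2
    simp only [hbφp, map_zero, zero_sub] at h
    rw [intervalIntegral.integral_of_le hx.2, integral_Ioc_eq_integral_Ioo] at h
    rw [h, neg_neg]
  have hconjint : ∫ t in Ioo (-1:ℝ) 1, (starRingEnd ℂ) (d1 t) = 0 := by
    rw [← hcc]
    have h := ftc (fun t => (starRingEnd ℂ) (φ t)) (fun t => (starRingEnd ℂ) (d1 t))
      hconjd ccd1 (-1) hm1 1 hp1 h11
    simp only [hbφp, hbφm, map_zero, sub_zero] at h
    exact h
  -- the d3 FTC on Ioo pieces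
  have hd4piece : ∀ t ∈ Icc (-1:ℝ) 1, ∫ x in Ioo (-1:ℝ) t, d4 x = d3 t - d3 (-1) := by
    intro t ht
    rw [← integral_Ioc_eq_integral_Ioo, ← intervalIntegral.integral_of_le ht.1]
    rw [hd4FTC t ht]
    ring
  -- IBP identity 1 : ∫ conjφ * d2 = - ∫ ‖d1‖²
  have hQ : ∫ x in Ioo (-1:ℝ) 1, (starRingEnd ℂ) (φ x) * d2 x
      = -((∫ x in Ioo (-1:ℝ) 1, ‖d1 x‖ ^ 2 : ℝ) : ℂ) := by
    have h := ibp (fun t => (starRingEnd ℂ) (φ t)) (fun t => (starRingEnd ℂ) (d1 t)) d1 d2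
      hconjd hd2 ccd1 cd2
    simp only [hbd1p, hbd1m, mul_zero, sub_zero, zero_sub] at h
    have h2 : ∫ x in (-1:ℝ)..1, (starRingEnd ℂ) (d1 x) * d1 x
        = ((∫ x in (-1:ℝ)..1, ‖d1 x‖ ^ 2 : ℝ) : ℂ) := by
      rw [← intervalIntegral.integral_ofReal]
      apply intervalIntegral.integral_congr
      intro x _
      beta_reduce
      rw [Complex.conj_mul']
      norm_cast
    rw [h2] at h
    rw [← hcc, ← hcr]
    exact h
  -- IBP identity 2 : ∫ conj d1 * d3 = - ∫ ‖d2‖²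
  have hT2 : ∫ x in Ioo (-1:ℝ) 1, (starRingEnd ℂ) (d1 x) * d3 x
      = -((∫ x in Ioo (-1:ℝ) 1, ‖d2 x‖ ^ 2 : ℝ) : ℂ) := by
    have h := ibp (fun t => (starRingEnd ℂ) (d1 t)) (fun t => (starRingEnd ℂ) (d2 t)) d2 d3
      hconjd1 hd3 ccd2 cd3
    simp only [hbd1p, hbd1m, map_zero, zero_mul, sub_zero, zero_sub, sub_self] at h
    have h2 : ∫ x in (-1:ℝ)..1, (starRingEnd ℂ) (d2 x) * d2 x
        = ((∫ x in (-1:ℝ)..1, ‖d2 x‖ ^ 2 : ℝ) : ℂ) := by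
      rw [← intervalIntegral.integral_ofReal]
      apply intervalIntegral.integral_congr
      intro x _
      beta_reduce
      rw [Complex.conj_mul']
      norm_cast
    rw [h2] at h
    rw [← hcc, ← hcr]
    exact h
  -- the key d4 identity : ∫ conjφ * d4 = ∫ ‖d2‖²
  have hP : ∫ x in Ioo (-1:ℝ) 1, (starRingEnd ℂ) (φ x) * d4 x
      = ((∫ x in Ioo (-1:ℝ) 1, ‖d2 x‖ ^ 2 : ℝ) : ℂ) := by
    have e1 : ∫ x in Ioo (-1:ℝ) 1, (starRingEnd ℂ) (φ x) * d4 x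
        = ∫ x in Ioo (-1:ℝ) 1, -((∫ t in Ioo x 1, (starRingEnd ℂ) (d1 t)) * d4 x) := by
      apply setIntegral_congr_fun measurableSet_Ioo
      intro x hx
      beta_reduce
      rw [hconjtail x (hsub hx)]
      ring
    rw [e1, integral_neg, stmt11_swap d4 (fun t => (starRingEnd ℂ) (d1 t)) hd4int
      (hIntC _ ccd1)]
    have e2 : ∫ t in Ioo (-1:ℝ) 1, (starRingEnd ℂ) (d1 t) * ∫ x in Ioo (-1:ℝ) t, d4 x
        = ∫ t in Ioo (-1:ℝ) 1, ((starRingEnd ℂ) (d1 t) * d3 t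
            - (starRingEnd ℂ) (d1 t) * d3 (-1)) := by
      apply setIntegral_congr_fun measurableSet_Ioo
      intro t ht
      beta_reduce
      rw [hd4piece t (hsub ht)]
      ring
    rw [e2, integral_sub (hIntC (fun t => (starRingEnd ℂ) (d1 t) * d3 t) (ccd1.mul cd3))
      ((hIntC _ ccd1).mul_const (d3 (-1))), integral_mul_const, hconjint, hT2]
    ring
  -- IBP identity 3 : the (U - nu) term
  have hprod : ∀ x ∈ Icc (-1:ℝ) 1, HasDerivWithinAt
      (fun t => ((U t - ν : ℝ) : ℂ) * (starRingEnd ℂ) (φ t))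
      (((U1 x : ℝ) : ℂ) * (starRingEnd ℂ) (φ x) + ((U x - ν : ℝ) : ℂ) * (starRingEnd ℂ) (d1 x))
      (Icc (-1:ℝ) 1) x := fun x hx => (hUν x hx).mul (hconjd x hx)
  have hIntR : ∀ g : ℝ → ℝ, ContinuousOn g (Icc (-1:ℝ) 1) → IntegrableOn g (Ioo (-1:ℝ) 1) volume :=
    fun g hg => (hg.integrableOn_Icc).mono_set hsub
  have cU1c : ContinuousOn (fun t => ((U1 t : ℝ) : ℂ)) (Icc (-1:ℝ) 1) :=
    Complex.continuous_ofReal.comp_continuousOn cU1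
  have cU2c : ContinuousOn (fun t => ((U2 t : ℝ) : ℂ)) (Icc (-1:ℝ) 1) :=
    Complex.continuous_ofReal.comp_continuousOn hU2c
  have hR : (∫ x in Ioo (-1:ℝ) 1, ((U x - ν : ℝ) : ℂ) * ((starRingEnd ℂ) (φ x) * d2 x)).im
      = -(∫ x in Ioo (-1:ℝ) 1, ((U1 x : ℝ) : ℂ) * ((starRingEnd ℂ) (φ x) * d1 x)).im := by
    have cu' : ContinuousOn (fun t => ((U1 t:ℝ):ℂ) * (starRingEnd ℂ) (φ t)
        + ((U t - ν:ℝ):ℂ) * (starRingEnd ℂ) (d1 t)) (Icc (-1:ℝ) 1) :=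
      (cU1c.mul ccφ).add (cUν.mul ccd1)
    have h := ibp (fun t => ((U t - ν:ℝ):ℂ) * (starRingEnd ℂ) (φ t))
      (fun t => ((U1 t:ℝ):ℂ) * (starRingEnd ℂ) (φ t) + ((U t - ν:ℝ):ℂ) * (starRingEnd ℂ) (d1 t))
      d1 d2 hprod hd2 cu' cd2
    simp only [hbd1p, hbd1m, mul_zero, sub_zero, zero_sub] at h
    rw [hcc, hcc] at h
    have e1 : ∫ x in Ioo (-1:ℝ) 1, ((U x - ν:ℝ):ℂ) * ((starRingEnd ℂ) (φ x) * d2 x)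
        = ∫ x in Ioo (-1:ℝ) 1, (((U x - ν:ℝ):ℂ) * (starRingEnd ℂ) (φ x)) * d2 x := by
      apply setIntegral_congr_fun measurableSet_Ioo
      intro x hx; beta_reduce; ring
    have e2 : ∫ x in Ioo (-1:ℝ) 1, (((U1 x:ℝ):ℂ) * (starRingEnd ℂ) (φ x)
          + ((U x - ν:ℝ):ℂ) * (starRingEnd ℂ) (d1 x)) * d1 x
        = (∫ x in Ioo (-1:ℝ) 1, ((U1 x:ℝ):ℂ) * ((starRingEnd ℂ) (φ x) * d1 x))
          + ((∫ x in Ioo (-1:ℝ) 1, (U x - ν) * ‖d1 x‖^2 : ℝ) : ℂ) := by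
      have e3 : ∫ x in Ioo (-1:ℝ) 1, (((U1 x:ℝ):ℂ) * (starRingEnd ℂ) (φ x)
            + ((U x - ν:ℝ):ℂ) * (starRingEnd ℂ) (d1 x)) * d1 x
          = ∫ x in Ioo (-1:ℝ) 1, (((U1 x:ℝ):ℂ) * ((starRingEnd ℂ) (φ x) * d1 x)
            + ((U x - ν:ℝ):ℂ) * ((starRingEnd ℂ) (d1 x) * d1 x)) := by
        apply setIntegral_congr_fun measurableSet_Ioo
        intro x hx; beta_reduce; ring
      rw [e3, integral_add (hIntC (fun x => ((U1 x:ℝ):ℂ) * ((starRingEnd ℂ) (φ x) * d1 x)) (cU1c.mul (ccφ.mul cd1)))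
        (hIntC (fun x => ((U x - ν:ℝ):ℂ) * ((starRingEnd ℂ) (d1 x) * d1 x)) (cUν.mul (ccd1.mul cd1)))]
      congr 1
      have hcast : ∫ x in Ioo (-1:ℝ) 1, (((U x - ν) * ‖d1 x‖^2 : ℝ) : ℂ)
          = ((∫ x in Ioo (-1:ℝ) 1, (U x - ν) * ‖d1 x‖^2 : ℝ) : ℂ) := integral_ofReal
      rw [← hcast]
      apply setIntegral_congr_fun measurableSet_Ioo
      intro x hx; beta_reduce
      rw [Complex.conj_mul']
      push_cast
      ring_nf
    rw [e1, h, e2]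
    simp [Complex.add_im, Complex.neg_im, Complex.ofReal_im]
  -- pointwise real-coercion identities
  have hN : ∫ x in Ioo (-1:ℝ) 1, (starRingEnd ℂ) (φ x) * φ x
      = ((∫ x in Ioo (-1:ℝ) 1, ‖φ x‖^2 : ℝ) : ℂ) := by
    have hcast : ∫ x in Ioo (-1:ℝ) 1, ((‖φ x‖^2 : ℝ) : ℂ) = ((∫ x in Ioo (-1:ℝ) 1, ‖φ x‖^2 : ℝ) : ℂ) := integral_ofReal
    rw [← hcast]
    apply setIntegral_congr_fun measurableSet_Ioo
    intro x hx; beta_reduce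
    rw [Complex.conj_mul']; norm_cast
  have hS : ∫ x in Ioo (-1:ℝ) 1, ((U x - ν:ℝ):ℂ) * ((starRingEnd ℂ) (φ x) * φ x)
      = ((∫ x in Ioo (-1:ℝ) 1, (U x - ν) * ‖φ x‖^2 : ℝ) : ℂ) := by
    have hcast : ∫ x in Ioo (-1:ℝ) 1, (((U x - ν) * ‖φ x‖^2 : ℝ) : ℂ) = ((∫ x in Ioo (-1:ℝ) 1, (U x - ν) * ‖φ x‖^2 : ℝ) : ℂ) := integral_ofReal
    rw [← hcast]
    apply setIntegral_congr_fun measurableSet_Ioo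
    intro x hx; beta_reduce
    rw [Complex.conj_mul']; push_cast; ring_nf
  have hW : ∫ x in Ioo (-1:ℝ) 1, ((U2 x:ℝ):ℂ) * ((starRingEnd ℂ) (φ x) * φ x)
      = ((∫ x in Ioo (-1:ℝ) 1, U2 x * ‖φ x‖^2 : ℝ) : ℂ) := by
    have hcast : ∫ x in Ioo (-1:ℝ) 1, ((U2 x * ‖φ x‖^2 : ℝ) : ℂ) = ((∫ x in Ioo (-1:ℝ) 1, U2 x * ‖φ x‖^2 : ℝ) : ℂ) := integral_ofReal
    rw [← hcast]
    apply setIntegral_congr_fun measurableSet_Ioo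
    intro x hx; beta_reduce
    rw [Complex.conj_mul']; push_cast; ring_nf
  -- assemble A
  have hp1 : Integrable (fun x => (starRingEnd ℂ) (φ x) * d4 x)
      (volume.restrict (Ioo (-1:ℝ) 1)) := hd4int.bdd_mul (hmeasC _ ccφ) hφb
  have hpf : Integrable (fun x => (starRingEnd ℂ) (φ x) * f x)
      (volume.restrict (Ioo (-1:ℝ) 1)) := hfint.bdd_mul (hmeasC _ ccφ) hφb
  have hp2 : Integrable (fun x => ((β*μ - α^2 : ℝ):ℂ) * ((starRingEnd ℂ) (φ x) * d2 x))
      (volume.restrict (Ioo (-1:ℝ) 1)) := (hIntC _ (ccφ.mul cd2)).const_mul _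
  have hp3 : Integrable (fun x => ((-(α^2*β*μ) : ℝ):ℂ) * ((starRingEnd ℂ) (φ x) * φ x))
      (volume.restrict (Ioo (-1:ℝ) 1)) := (hIntC _ (ccφ.mul cφ)).const_mul _
  have hp4 : Integrable (fun x => (-(Complex.I*(β:ℂ)))
        * (((U x - ν:ℝ):ℂ) * ((starRingEnd ℂ) (φ x) * d2 x)))
      (volume.restrict (Ioo (-1:ℝ) 1)) := (hIntC _ (cUν.mul (ccφ.mul cd2))).const_mul _
  have hp5 : Integrable (fun x => (Complex.I*(β:ℂ)*(α:ℂ)^2)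
        * (((U x - ν:ℝ):ℂ) * ((starRingEnd ℂ) (φ x) * φ x)))
      (volume.restrict (Ioo (-1:ℝ) 1)) := (hIntC _ (cUν.mul (ccφ.mul cφ))).const_mul _
  have hp6 : Integrable (fun x => (Complex.I*(β:ℂ))
        * (((U2 x:ℝ):ℂ) * ((starRingEnd ℂ) (φ x) * φ x)))
      (volume.restrict (Ioo (-1:ℝ) 1)) := (hIntC _ (cU2c.mul (ccφ.mul cφ))).const_mul _
  have hpoint : ∀ᵐ x ∂(volume.restrict (Ioo (-1:ℝ) 1)),
      (starRingEnd ℂ) (φ x) * f x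
        = (starRingEnd ℂ) (φ x) * d4 x
          + ((β*μ - α^2 : ℝ):ℂ) * ((starRingEnd ℂ) (φ x) * d2 x)
          + ((-(α^2*β*μ) : ℝ):ℂ) * ((starRingEnd ℂ) (φ x) * φ x)
          + (-(Complex.I*(β:ℂ))) * (((U x - ν:ℝ):ℂ) * ((starRingEnd ℂ) (φ x) * d2 x))
          + (Complex.I*(β:ℂ)*(α:ℂ)^2) * (((U x - ν:ℝ):ℂ) * ((starRingEnd ℂ) (φ x) * φ x))
          + (Complex.I*(β:ℂ)) * (((U2 x:ℝ):ℂ) * ((starRingEnd ℂ) (φ x) * φ x)) := by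
    filter_upwards [heq] with x hx
    rw [← hx]
    push_cast
    ring_nf
    simp only [Complex.I_sq]
    ring
  have hs12 : Integrable (fun x => (starRingEnd ℂ) (φ x) * d4 x + ((β*μ - α^2 : ℝ):ℂ) * ((starRingEnd ℂ) (φ x) * d2 x)) (volume.restrict (Ioo (-1:ℝ) 1)) := hp1.add hp2
  have hs13 : Integrable (fun x => (starRingEnd ℂ) (φ x) * d4 x + ((β*μ - α^2 : ℝ):ℂ) * ((starRingEnd ℂ) (φ x) * d2 x) + ((-(α^2*β*μ) : ℝ):ℂ) * ((starRingEnd ℂ) (φ x) * φ x)) (volume.restrict (Ioo (-1:ℝ) 1)) := hs12.add hp3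
  have hs14 : Integrable (fun x => (starRingEnd ℂ) (φ x) * d4 x + ((β*μ - α^2 : ℝ):ℂ) * ((starRingEnd ℂ) (φ x) * d2 x) + ((-(α^2*β*μ) : ℝ):ℂ) * ((starRingEnd ℂ) (φ x) * φ x) + (-(Complex.I*(β:ℂ))) * (((U x - ν:ℝ):ℂ) * ((starRingEnd ℂ) (φ x) * d2 x))) (volume.restrict (Ioo (-1:ℝ) 1)) := hs13.add hp4
  have hs15 : Integrable (fun x => (starRingEnd ℂ) (φ x) * d4 x + ((β*μ - α^2 : ℝ):ℂ) * ((starRingEnd ℂ) (φ x) * d2 x) + ((-(α^2*β*μ) : ℝ):ℂ) * ((starRingEnd ℂ) (φ x) * φ x) + (-(Complex.I*(β:ℂ))) * (((U x - ν:ℝ):ℂ) * ((starRingEnd ℂ) (φ x) * d2 x)) + (Complex.I*(β:ℂ)*(α:ℂ)^2) * (((U x - ν:ℝ):ℂ) * ((starRingEnd ℂ) (φ x) * φ x))) (volume.restrict (Ioo (-1:ℝ) 1)) := hs14.add hp5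
  have hAeq : ∫ x in Ioo (-1:ℝ) 1, (starRingEnd ℂ) (φ x) * f x
      = ((∫ x in Ioo (-1:ℝ) 1, ‖d2 x‖^2 : ℝ) : ℂ)
        + ((β*μ - α^2 : ℝ):ℂ) * (-((∫ x in Ioo (-1:ℝ) 1, ‖d1 x‖ ^ 2 : ℝ) : ℂ))
        + ((-(α^2*β*μ) : ℝ):ℂ) * ((∫ x in Ioo (-1:ℝ) 1, ‖φ x‖^2 : ℝ) : ℂ)
        + (-(Complex.I*(β:ℂ)))
            * (∫ x in Ioo (-1:ℝ) 1, ((U x - ν:ℝ):ℂ) * ((starRingEnd ℂ) (φ x) * d2 x))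
        + (Complex.I*(β:ℂ)*(α:ℂ)^2) * ((∫ x in Ioo (-1:ℝ) 1, (U x - ν) * ‖φ x‖^2 : ℝ) : ℂ)
        + (Complex.I*(β:ℂ)) * ((∫ x in Ioo (-1:ℝ) 1, U2 x * ‖φ x‖^2 : ℝ) : ℂ) := by
    rw [integral_congr_ae hpoint,
      integral_add hs15 hp6,
      integral_add hs14 hp5,
      integral_add hs13 hp4,
      integral_add hs12 hp3,
      integral_add hp1 hp2,
      integral_const_mul, integral_const_mul, integral_const_mul, integral_const_mul,
      integral_const_mul, hP, hQ, hN, hS, hW]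
  -- convert goal to Ioo integrals and name everything
  rw [hcr (fun x => ‖d1 x‖^2), hcr (fun x => ‖φ x‖^2), hcr (fun x => ‖f x‖^2)]
  set I0 := ∫ x in Ioo (-1:ℝ) 1, ‖φ x‖^2 with hI0def
  set I1 := ∫ x in Ioo (-1:ℝ) 1, ‖d1 x‖^2 with hI1def
  set I2 := ∫ x in Ioo (-1:ℝ) 1, ‖d2 x‖^2 with hI2def
  set If := ∫ x in Ioo (-1:ℝ) 1, ‖f x‖^2 with hIfdef
  set A := ∫ x in Ioo (-1:ℝ) 1, (starRingEnd ℂ) (φ x) * f x with hAdef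
  set R := ∫ x in Ioo (-1:ℝ) 1, ((U x - ν:ℝ):ℂ) * ((starRingEnd ℂ) (φ x) * d2 x) with hRdef
  set T := ∫ x in Ioo (-1:ℝ) 1, ((U1 x:ℝ):ℂ) * ((starRingEnd ℂ) (φ x) * d1 x) with hTdef
  have hI0nn : (0:ℝ) ≤ I0 := setIntegral_nonneg measurableSet_Ioo fun x _ => by positivity
  have hI1nn : (0:ℝ) ≤ I1 := setIntegral_nonneg measurableSet_Ioo fun x _ => by positivity
  have hI2nn : (0:ℝ) ≤ I2 := setIntegral_nonneg measurableSet_Ioo fun x _ => by positivity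
  have hIfnn : (0:ℝ) ≤ If := setIntegral_nonneg measurableSet_Ioo fun x _ => by positivity
  -- Memℒp facts
  have hφ2 : MemLp φ 2 (volume.restrict (Ioo (-1:ℝ) 1)) :=
    MemLp.of_bound (hmeasC φ cφ) Cφ (by
      filter_upwards [ae_restrict_mem measurableSet_Ioo] with x hx
      exact hCφ x (hsub hx))
  obtain ⟨Cd1, hCd1⟩ : ∃ C, ∀ x ∈ Icc (-1:ℝ) 1, ‖d1 x‖ ≤ C :=
    isCompact_Icc.exists_bound_of_continuousOn cd1
  have hd12 : MemLp d1 2 (volume.restrict (Ioo (-1:ℝ) 1)) :=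
    MemLp.of_bound (hmeasC d1 cd1) Cd1 (by
      filter_upwards [ae_restrict_mem measurableSet_Ioo] with x hx
      exact hCd1 x (hsub hx))
  -- Hölder (Cauchy–Schwarz)
  have holder : ∀ (g h : ℝ → ℂ), MemLp g 2 (volume.restrict (Ioo (-1:ℝ) 1)) →
      MemLp h 2 (volume.restrict (Ioo (-1:ℝ) 1)) →
      ∫ x in Ioo (-1:ℝ) 1, ‖g x‖ * ‖h x‖
        ≤ Real.sqrt (∫ x in Ioo (-1:ℝ) 1, ‖g x‖^2)
          * Real.sqrt (∫ x in Ioo (-1:ℝ) 1, ‖h x‖^2) := by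
    intro g h hg hh
    have hpq : (2:ℝ).HolderConjugate 2 := Real.HolderConjugate.two_two
    have h2 : (ENNReal.ofReal (2:ℝ)) = 2 := by norm_num
    have key := integral_mul_norm_le_Lp_mul_Lq (μ := volume.restrict (Ioo (-1:ℝ) 1)) hpq
      (by rw [h2]; exact hg) (by rw [h2]; exact hh)
    have e1 : ∀ (k : ℝ → ℂ), (∫ x in Ioo (-1:ℝ) 1, ‖k x‖^(2:ℝ))
        = ∫ x in Ioo (-1:ℝ) 1, ‖k x‖^2 := by
      intro k
      apply setIntegral_congr_fun measurableSet_Ioo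
      intro x hx
      beta_reduce
      rw [show (2:ℝ) = ((2:ℕ):ℝ) by norm_num, Real.rpow_natCast]
    calc ∫ x in Ioo (-1:ℝ) 1, ‖g x‖ * ‖h x‖
        ≤ (∫ x in Ioo (-1:ℝ) 1, ‖g x‖^(2:ℝ))^(1/2:ℝ)
          * (∫ x in Ioo (-1:ℝ) 1, ‖h x‖^(2:ℝ))^(1/2:ℝ) := key
      _ = _ := by
          rw [e1 g, e1 h, ← Real.sqrt_eq_rpow, ← Real.sqrt_eq_rpow]
  have hCS1 : ∫ x in Ioo (-1:ℝ) 1, ‖φ x‖ * ‖f x‖ ≤ Real.sqrt I0 * Real.sqrt If :=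
    holder φ f hφ2 hf
  have hCS2 : ∫ x in Ioo (-1:ℝ) 1, ‖φ x‖ * ‖d1 x‖ ≤ Real.sqrt I0 * Real.sqrt I1 :=
    holder φ d1 hφ2 hd12
  -- Poincaré : I0 ≤ 4 I1
  have honeInt : ∫ x in Ioo (-1:ℝ) 1, ‖(1:ℂ)‖^2 = 2 := by
    simp [Real.volume_Ioo]
    norm_num
  have hJle : ∫ x in Ioo (-1:ℝ) 1, ‖d1 x‖ ≤ Real.sqrt I1 * Real.sqrt 2 := by
    have h0 : ∫ x in Ioo (-1:ℝ) 1, ‖d1 x‖ = ∫ x in Ioo (-1:ℝ) 1, ‖d1 x‖ * ‖(1:ℂ)‖ := by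
      simp
    rw [h0]
    have := holder d1 (fun _ => (1:ℂ)) hd12 (memLp_const 1)
    rwa [honeInt] at this
  have hφle : ∀ x ∈ Icc (-1:ℝ) 1, ‖φ x‖ ≤ ∫ t in Ioo (-1:ℝ) 1, ‖d1 t‖ := by
    intro x hx
    rw [hφeq x hx]
    have hint : IntervalIntegrable (fun t => ‖d1 t‖) volume (-1) 1 :=
      (huIcc ▸ cd1.norm : ContinuousOn _ (uIcc (-1:ℝ) 1)).intervalIntegrable
    calc ‖∫ t in (-1:ℝ)..x, d1 t‖ ≤ ∫ t in (-1:ℝ)..x, ‖d1 t‖ :=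
          intervalIntegral.norm_integral_le_integral_norm hx.1
      _ ≤ ∫ t in (-1:ℝ)..1, ‖d1 t‖ :=
          intervalIntegral.integral_mono_interval le_rfl hx.1 hx.2
            (Filter.Eventually.of_forall fun t => norm_nonneg _) hint
      _ = ∫ t in Ioo (-1:ℝ) 1, ‖d1 t‖ := hcr _
  have hJnn : (0:ℝ) ≤ ∫ t in Ioo (-1:ℝ) 1, ‖d1 t‖ :=
    setIntegral_nonneg measurableSet_Ioo fun x _ => norm_nonneg _
  have hpoin : I0 ≤ 4*I1 := by
    have h1 : I0 ≤ ∫ x in Ioo (-1:ℝ) 1, (∫ t in Ioo (-1:ℝ) 1, ‖d1 t‖)^2 := by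
      apply setIntegral_mono_on (hIntR (fun x => ‖φ x‖^2) ((cφ.norm).pow 2))
        (integrable_const _) measurableSet_Ioo
      intro x hx
      have := hφle x (hsub hx)
      have h2 := norm_nonneg (φ x)
      nlinarith
    have h2 : ∫ x in Ioo (-1:ℝ) 1, (∫ t in Ioo (-1:ℝ) 1, ‖d1 t‖)^2
        = 2 * (∫ t in Ioo (-1:ℝ) 1, ‖d1 t‖)^2 := by
      have hv : (volume (Ioo (-1:ℝ) 1)).toReal = 2 := by
        rw [Real.volume_Ioo]
        rw [ENNReal.toReal_ofReal (by norm_num)]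
        norm_num
      rw [setIntegral_const, measureReal_def, hv, smul_eq_mul]
    have h4 : (Real.sqrt I1 * Real.sqrt 2)^2 = I1 * 2 := by
      rw [mul_pow, Real.sq_sqrt hI1nn, Real.sq_sqrt (by norm_num : (0:ℝ) ≤ 2)]
    have h5 : (∫ t in Ioo (-1:ℝ) 1, ‖d1 t‖)^2 ≤ I1*2 := by
      have h6 := pow_le_pow_left₀ hJnn hJle 2
      rw [h4] at h6
      exact h6
    linarith
  -- bound on T.im
  have hMU1nn : 0 ≤ MU1 := le_trans (abs_nonneg _) (hMU1 0 ⟨by norm_num, by norm_num⟩)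
  have hMU0 : 0 ≤ MU := le_trans (abs_nonneg _) (hMU 0 ⟨by norm_num, by norm_num⟩)
  have hTb : |T.im| ≤ MU1 * (Real.sqrt I0 * Real.sqrt I1) := by
    have h1 : |T.im| ≤ ‖T‖ := by
      exact Complex.abs_im_le_norm T
    have h2 : ‖T‖ ≤ ∫ x in Ioo (-1:ℝ) 1, ‖((U1 x:ℝ):ℂ) * ((starRingEnd ℂ) (φ x) * d1 x)‖ := by
      rw [hTdef]
      exact norm_integral_le_integral_norm _
    have h3 : ∫ x in Ioo (-1:ℝ) 1, ‖((U1 x:ℝ):ℂ) * ((starRingEnd ℂ) (φ x) * d1 x)‖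
        ≤ ∫ x in Ioo (-1:ℝ) 1, MU1 * (‖φ x‖ * ‖d1 x‖) := by
      apply setIntegral_mono_on ((hIntC (fun x => ((U1 x:ℝ):ℂ) * ((starRingEnd ℂ) (φ x) * d1 x)) (cU1c.mul (ccφ.mul cd1))).norm)
        ((hIntR (fun x => ‖φ x‖ * ‖d1 x‖) ((cφ.norm).mul (cd1.norm))).const_mul MU1) measurableSet_Ioo
      intro x hx
      have e : ‖((U1 x:ℝ):ℂ) * ((starRingEnd ℂ) (φ x) * d1 x)‖
          = |U1 x| * (‖φ x‖ * ‖d1 x‖) := by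
        simp [norm_mul, RCLike.norm_conj, Complex.norm_real]
      rw [e]
      exact mul_le_mul_of_nonneg_right (hMU1 x (hsub hx)) (by positivity)
    have h4 : ∫ x in Ioo (-1:ℝ) 1, MU1 * (‖φ x‖ * ‖d1 x‖)
        = MU1 * ∫ x in Ioo (-1:ℝ) 1, ‖φ x‖ * ‖d1 x‖ := integral_const_mul _ _
    have h5 := mul_le_mul_of_nonneg_left hCS2 hMU1nn
    linarith
  -- real part of A
  have hAre : A.re = I2 - (β*μ - α^2)*I1 - α^2*β*μ*I0 + β*R.im := by
    rw [congrArg Complex.re hAeq]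
    simp [Complex.add_re, Complex.mul_re, Complex.mul_im, Complex.I_re, Complex.I_im,
      Complex.ofReal_re, Complex.ofReal_im, Complex.neg_re, Complex.neg_im, ← Complex.ofReal_pow]
    ring
  -- upper bound
  have hup : A.re ≤ Real.sqrt I0 * Real.sqrt If := by
    have h1 : A.re ≤ ‖A‖ := by
      exact Complex.re_le_norm A
    have h2 : ‖A‖ ≤ ∫ x in Ioo (-1:ℝ) 1, ‖(starRingEnd ℂ) (φ x) * f x‖ := by
      rw [hAdef]
      exact norm_integral_le_integral_norm _
    have h3 : ∫ x in Ioo (-1:ℝ) 1, ‖(starRingEnd ℂ) (φ x) * f x‖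
        = ∫ x in Ioo (-1:ℝ) 1, ‖φ x‖ * ‖f x‖ := by
      apply setIntegral_congr_fun measurableSet_Ioo
      intro x hx
      beta_reduce
      simp [norm_mul, RCLike.norm_conj]
    linarith
  -- final numeric assembly
  have hμ2 : μ ≤ -2 := by nlinarith [sq_nonneg MU1]
  have hμneg : μ < 0 := lt_of_le_of_lt hμ2 (by norm_num)
  rw [abs_of_neg hμneg]
  have hTim : -(MU1 * (Real.sqrt I0 * Real.sqrt I1)) ≤ T.im ∧
      T.im ≤ MU1 * (Real.sqrt I0 * Real.sqrt I1) := abs_le.mp hTb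
  have h6 : β * (-(MU1 * (Real.sqrt I0 * Real.sqrt I1))) ≤ β * (-T.im) := by
    have := hTim.2
    nlinarith
  have hA1 : β*(-μ)*I1 + β*(-μ)*(α^2*I0) - β*(MU1*(Real.sqrt I0 * Real.sqrt I1)) ≤ A.re := by
    rw [hAre, hR]
    have h7 : 0 ≤ α^2*I1 := by positivity
    nlinarith [hI2nn]
  have h8 : Real.sqrt I0 * Real.sqrt I1 ≤ 2*I1 := by
    have h7 : Real.sqrt I0 ≤ 2*Real.sqrt I1 := by
      have := Real.sqrt_le_sqrt hpoin
      have e : Real.sqrt (4*I1) = 2*Real.sqrt I1 := by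
        rw [show (4:ℝ)*I1 = (2*Real.sqrt I1)^2 from by
          rw [mul_pow, Real.sq_sqrt hI1nn]; ring]
        exact Real.sqrt_sq (by positivity)
      linarith [e ▸ this]
    nlinarith [Real.sqrt_nonneg I1, Real.sq_sqrt hI1nn]
  have h10 : 4*MU1 ≤ -μ := by nlinarith [sq_nonneg (MU1 - 1)]
  have hkey : β*(-μ)/2*(I1 + α^2*I0) ≤ Real.sqrt I0 * Real.sqrt If := by
    have h11 : β*(MU1*(Real.sqrt I0 * Real.sqrt I1)) ≤ β*(-μ)/2*I1 := by
      have h12 : MU1*(Real.sqrt I0 * Real.sqrt I1) ≤ MU1*(2*I1) :=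
        mul_le_mul_of_nonneg_left h8 hMU1nn
      nlinarith [mul_nonneg hβ.le hI1nn]
    have h13 : 0 ≤ β*(-μ)/2*(α^2*I0) := by
      have hm : (0:ℝ) ≤ β*(-μ)/2 := by nlinarith
      exact mul_nonneg hm (by positivity)
    nlinarith [hA1, hup]
  have hc : 0 < β*(-μ) := mul_pos hβ (by linarith)
  rw [show 2/(β*(-μ))*Real.sqrt I0*Real.sqrt If
      = 2*(Real.sqrt I0*Real.sqrt If)/(β*(-μ)) from by ring, le_div_iff₀ hc]
  nlinarith [hkey]
end
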